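/- arXiv:1510.03502 — 9 statements merged into one kernel-verified Lean document; each statement's English description precedes it below -/
import Mathlib

section
/- Let M range over all multisets of m Latin Hypercube d-trials on [n]. The expected number of d-tuples in [n]^d that belong to every trial of a uniformly random such multiset M equals n^d · binomial(((n-1)!)^(d-1)+m-1, m) / binomial((n!)^(d-1)+m-1, m). -/
/-- A Latin Hypercube `d`-trial on `[n]`: a multiset of `n` points of `[n]^d`
(encoded as `Sym (Fin d → Fin n) n`) whose projection onto each coordinate is
a permutation of `[n]`, i.e. equals the multiset `{1,…,n}`. -/
def IsLHTrial {n d : ℕ} (H : Sym (Fin d → Fin n) n) : Prop :=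
  ∀ i : Fin d, (H : Multiset (Fin d → Fin n)).map (fun r => r i)
    = (Finset.univ : Finset (Fin n)).val

instance {n d : ℕ} : DecidablePred (IsLHTrial (n := n) (d := d)) := fun H => by
  unfold IsLHTrial; infer_instance

/-- The finset of all Latin Hypercube `d`-trials on `[n]`. -/
def LHTrial (n d : ℕ) : Finset (Sym (Fin d → Fin n) n) :=
  Finset.univ.filter IsLHTrial

/-- The type of Latin Hypercube `d`-trials on `[n]`. -/
abbrev LHT (n d : ℕ) := {H : Sym (Fin d → Fin n) n // IsLHTrial H}

open Finset

section LH
variable {n d : ℕ} (z : Fin d)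

/-- The point family associated to a family of permutations. -/
def LHg (σ : {i : Fin d // i ≠ z} → Equiv.Perm (Fin n)) (k : Fin n) : Fin d → Fin n :=
  fun i => if h : i = z then k else σ ⟨i, h⟩ k

lemma LHg_z (σ : {i : Fin d // i ≠ z} → Equiv.Perm (Fin n)) (k : Fin n) :
    LHg z σ k z = k := by simp [LHg]

lemma LHg_ne (σ : {i : Fin d // i ≠ z} → Equiv.Perm (Fin n)) (k : Fin n) {i : Fin d}
    (h : i ≠ z) : LHg z σ k i = σ ⟨i, h⟩ k := by simp [LHg, h]

/-- The Latin hypercube trial associated to a family of permutations. -/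
def LHmk (σ : {i : Fin d // i ≠ z} → Equiv.Perm (Fin n)) : LHT n d :=
  ⟨⟨Multiset.map (LHg z σ) Finset.univ.val, by simp⟩, by
    intro i
    show (Multiset.map (LHg z σ) Finset.univ.val).map (fun r => r i) = Finset.univ.val
    rw [Multiset.map_map]
    by_cases h : i = z
    · subst h
      simp only [Function.comp_def, LHg_z, Multiset.map_id']
    · have : ((fun r : Fin d → Fin n => r i) ∘ LHg z σ) = ⇑(σ ⟨i, h⟩) := by
        funext k; exact LHg_ne z σ k h
      rw [this, Multiset.map_univ_val_equiv]⟩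

lemma LHmk_coe (σ : {i : Fin d // i ≠ z} → Equiv.Perm (Fin n)) :
    ((LHmk z σ).1 : Multiset (Fin d → Fin n)) = Multiset.map (LHg z σ) Finset.univ.val := rfl

lemma LHmk_injective : Function.Injective (LHmk (n := n) z) := by
  intro σ σ' h
  have hms : Multiset.map (LHg z σ) Finset.univ.val = Multiset.map (LHg z σ') Finset.univ.val := by
    have := congrArg (fun H : LHT n d => (H.1 : Multiset (Fin d → Fin n))) h
    simpa [LHmk_coe] using this
  have key : ∀ k, LHg z σ k = LHg z σ' k := by
    intro k
    have hk : LHg z σ k ∈ Multiset.map (LHg z σ') Finset.univ.val := by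
      rw [← hms]
      exact Multiset.mem_map_of_mem _ (Finset.mem_univ_val k)
    obtain ⟨j, -, hj⟩ := Multiset.mem_map.mp hk
    have : j = k := by
      have := congrFun hj z
      rwa [LHg_z, LHg_z] at this
    rw [this] at hj
    exact hj.symm
  funext i
  apply Equiv.ext
  intro k
  have := congrFun (key k) i.1
  rwa [LHg_ne z σ k i.2, LHg_ne z σ' k i.2] at this

lemma LHmk_surjective : Function.Surjective (LHmk (n := n) z) := by
  intro H
  obtain ⟨⟨s, hcard⟩, htrial⟩ := H
  -- s is nodup
  have hz := htrial z
  simp only [Sym.coe_mk] at hz ⊢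
  have hnod : s.Nodup := Multiset.Nodup.of_map _ (hz ▸ Finset.univ.nodup)
  -- choose representatives
  have hex : ∀ k : Fin n, ∃ r ∈ s, r z = k := by
    intro k
    have : k ∈ Multiset.map (fun r => r z) s := hz ▸ Finset.mem_univ_val k
    simpa using this
  choose f hf hfz using hex
  have hfinj : Function.Injective f := fun a b hab => by
    rw [← hfz a, ← hfz b, hab]
  have hsub : Multiset.map f Finset.univ.val ≤ s := by
    rw [Multiset.le_iff_subset ((Finset.univ.nodup.map hfinj))]
    intro x hx
    obtain ⟨k, -, rfl⟩ := Multiset.mem_map.mp hx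
    exact hf k
  have hs : Multiset.map f Finset.univ.val = s := by
    apply Multiset.eq_of_le_of_card_le hsub
    simp [hcard]
  -- each coordinate of f is bijective
  have hbij : ∀ i : Fin d, Function.Bijective (fun k => f k i) := by
    intro i
    rw [Multiset.bijective_iff_map_univ_eq_univ]
    have := htrial i
    simp only [Sym.coe_mk] at this
    rw [← hs, Multiset.map_map] at this
    exact this
  refine ⟨fun i => Equiv.ofBijective _ (hbij i.1), ?_⟩
  have key : Multiset.map
      (LHg z (fun i : {i : Fin d // i ≠ z} => Equiv.ofBijective (fun k => f k i.1) (hbij i.1)))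
      Finset.univ.val = s := by
    rw [← hs]
    apply Multiset.map_congr rfl
    intro k _
    funext i
    by_cases h : i = z
    · subst h; rw [LHg_z, hfz]
    · rw [LHg_ne _ _ _ h]; rfl
  exact Subtype.ext (Subtype.ext key)

lemma mem_LHmk (σ : {i : Fin d // i ≠ z} → Equiv.Perm (Fin n)) (a : Fin d → Fin n) :
    a ∈ ((LHmk z σ).1 : Multiset (Fin d → Fin n)) ↔
      ∀ i : {i : Fin d // i ≠ z}, σ i (a z) = a i.1 := by
  rw [LHmk_coe, Multiset.mem_map]
  constructor
  · rintro ⟨k, -, rfl⟩ i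
    rw [LHg_z, ← LHg_ne z σ k i.2]
  · intro hσ
    refine ⟨a z, Finset.mem_univ_val _, ?_⟩
    funext i
    by_cases h : i = z
    · rw [h]; exact LHg_z z σ _
    · rw [LHg_ne z σ _ h]; exact hσ ⟨i, h⟩

end LH

/-- Multisets of size `m` all of whose elements satisfy `p` correspond to
multisets of size `m` of the subtype. -/
def symSubEquiv {α : Type*} (p : α → Prop) (m : ℕ) :
    {M : Sym α m // ∀ x ∈ (M : Multiset α), p x} ≃ Sym {x // p x} m where
  toFun M := ⟨(M.1.1.attach.map fun x => (⟨x.1, M.2 x.1 x.2⟩ : {x // p x})), by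
    simp [M.1.2]⟩
  invFun t := ⟨⟨t.1.map Subtype.val, by simp [t.2]⟩, by
    intro x hx
    obtain ⟨⟨y, py⟩, _, rfl⟩ := Multiset.mem_map.mp hx
    exact py⟩
  left_inv M := by
    ext : 3
    simp [Multiset.map_map]
  right_inv t := by
    apply Subtype.ext
    apply Multiset.map_injective Subtype.val_injective
    simp [Multiset.map_map]

lemma card_sym_sub {α : Type*} [DecidableEq α] [Fintype α] (p : α → Prop) [DecidablePred p]
    (m : ℕ) :
    Fintype.card {M : Sym α m // ∀ x ∈ (M : Multiset α), p x}
      = (Fintype.card {x // p x} + m - 1).choose m := by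
  rw [Fintype.card_congr (symSubEquiv p m), Sym.card_sym_eq_choose]

/-- The number of permutations sending `x` to `y` is `n!` on `Fin (n+1)`. -/
lemma card_perm_fiber {n : ℕ} (x y : Fin (n + 1)) :
    Fintype.card {π : Equiv.Perm (Fin (n + 1)) // π x = y} = n.factorial := by
  have e1 : {π : Equiv.Perm (Fin (n + 1)) // π x = y}
      ≃ {π : Equiv.Perm (Fin (n + 1)) // π 0 = y} :=
    (Equiv.mulRight (Equiv.swap 0 x)).subtypeEquiv (by
      intro π
      simp [Equiv.Perm.mul_apply])
  have e2 : {π : Equiv.Perm (Fin (n + 1)) // π 0 = y} ≃ Equiv.Perm (Fin n) :=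
    { toFun := fun π => (Equiv.Perm.decomposeFin π.1).2
      invFun := fun e => ⟨Equiv.Perm.decomposeFin.symm (y, e), by
        simp [Equiv.Perm.decomposeFin_symm_apply_zero]⟩
      left_inv := by
        intro ⟨π, hπ⟩
        apply Subtype.ext
        have : Equiv.Perm.decomposeFin π = (y, (Equiv.Perm.decomposeFin π).2) := by
          have h0 : (Equiv.Perm.decomposeFin π).1 = π 0 := by
            conv_rhs => rw [← Equiv.Perm.decomposeFin.symm_apply_apply π]
            rw [Equiv.Perm.decomposeFin_symm_apply_zero]
          rw [Prod.ext_iff]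
          exact ⟨h0.trans hπ, rfl⟩
        show Equiv.Perm.decomposeFin.symm (y, (Equiv.Perm.decomposeFin π).2) = π
        rw [← this, Equiv.symm_apply_apply]
      right_inv := by
        intro e
        simp }
  rw [Fintype.card_congr (e1.trans e2), Fintype.card_perm, Fintype.card_fin]

lemma card_LHT (n d' : ℕ) : Fintype.card (LHT n (d' + 1)) = n.factorial ^ d' := by
  have e : ({i : Fin (d' + 1) // i ≠ 0} → Equiv.Perm (Fin n)) ≃ LHT n (d' + 1) :=
    Equiv.ofBijective (LHmk 0) ⟨LHmk_injective 0, LHmk_surjective 0⟩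
  rw [← Fintype.card_congr e, Fintype.card_fun,
    ← Fintype.card_congr (finSuccAboveEquiv (0 : Fin (d' + 1))), Fintype.card_perm,
    Fintype.card_fin, Fintype.card_fin]

lemma card_LHT_fiber (n' d' : ℕ) (a : Fin (d' + 1) → Fin (n' + 1)) :
    Fintype.card {H : LHT (n' + 1) (d' + 1) // a ∈ (H.1 : Multiset (Fin (d' + 1) → Fin (n' + 1)))}
      = n'.factorial ^ d' := by
  have e2 : {H : LHT (n' + 1) (d' + 1) //
        a ∈ (H.1 : Multiset (Fin (d' + 1) → Fin (n' + 1)))}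
      ≃ ∀ i : {i : Fin (d' + 1) // i ≠ 0}, {π : Equiv.Perm (Fin (n' + 1)) // π (a 0) = a i.1} :=
    ((Equiv.subtypeEquiv
        (Equiv.ofBijective (LHmk (0 : Fin (d' + 1))) ⟨LHmk_injective 0, LHmk_surjective 0⟩)
        (fun σ => by
          exact (mem_LHmk 0 σ a).symm)).symm.trans Equiv.subtypePiEquivPi)
  rw [Fintype.card_congr e2, Fintype.card_pi]
  rw [Finset.prod_congr rfl (fun i _ => card_perm_fiber (a 0) (a i.1)), Finset.prod_const,
    ← Fintype.card, ← Fintype.card_congr (finSuccAboveEquiv (0 : Fin (d' + 1))),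
    Fintype.card_fin]

set_option maxHeartbeats 2000000

/-- the expected number of `d`-tuples in `[n]^d` common to all trials
of a uniformly random multiset of `m` Latin Hypercube `d`-trials on `[n]` equals
`n^d · C(((n-1)!)^(d-1)+m-1, m) / C((n!)^(d-1)+m-1, m)`. -/
theorem expected_intersection_LH (n d m : ℕ) (hn : 1 ≤ n) (hd : 1 ≤ d) (hm : 1 ≤ m) :
    (∑ M : Sym (LHT n d) m,
        ((Finset.univ.filter (fun a : Fin d → Fin n =>
          ∀ H ∈ (M : Multiset (LHT n d)),
            a ∈ ((H : LHT n d).1 : Multiset (Fin d → Fin n)))).card : ℚ))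
      / (Fintype.card (Sym (LHT n d) m) : ℚ)
    = (n : ℚ) ^ d * (((n - 1).factorial ^ (d - 1) + m - 1).choose m : ℚ)
        / ((n.factorial ^ (d - 1) + m - 1).choose m : ℚ) := by
  obtain ⟨n', rfl⟩ : ∃ n'', n = n'' + 1 := ⟨n - 1, (Nat.succ_pred_eq_of_pos hn).symm⟩
  obtain ⟨d', rfl⟩ : ∃ d'', d = d'' + 1 := ⟨d - 1, (Nat.succ_pred_eq_of_pos hd).symm⟩
  simp only [Nat.add_sub_cancel]
  have hnum : (∑ M : Sym (LHT (n' + 1) (d' + 1)) m,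
        (Finset.univ.filter (fun a : Fin (d' + 1) → Fin (n' + 1) =>
          ∀ H ∈ (M : Multiset (LHT (n' + 1) (d' + 1))),
            a ∈ ((H : LHT (n' + 1) (d' + 1)).1 : Multiset (Fin (d' + 1) → Fin (n' + 1))))).card)
      = (n' + 1) ^ (d' + 1) * ((n'.factorial ^ d' + m - 1).choose m) := by
    simp only [Finset.card_filter]
    rw [Finset.sum_comm]
    have key : ∀ a : Fin (d' + 1) → Fin (n' + 1),
        (∑ M : Sym (LHT (n' + 1) (d' + 1)) m,
          if (∀ H ∈ (M : Multiset (LHT (n' + 1) (d' + 1))),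
              a ∈ ((H : LHT (n' + 1) (d' + 1)).1 : Multiset (Fin (d' + 1) → Fin (n' + 1))))
            then 1 else 0)
        = (n'.factorial ^ d' + m - 1).choose m := by
      intro a
      rw [← Finset.card_filter, ← Fintype.card_subtype,
        card_sym_sub (fun H : LHT (n' + 1) (d' + 1) =>
          a ∈ (H.1 : Multiset (Fin (d' + 1) → Fin (n' + 1)))) m,
        card_LHT_fiber]
    have hconst : (∑ _a : Fin (d' + 1) → Fin (n' + 1), (n'.factorial ^ d' + m - 1).choose m)
        = (n' + 1) ^ (d' + 1) * (n'.factorial ^ d' + m - 1).choose m := by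
      rw [Finset.sum_const, smul_eq_mul, Finset.card_univ, Fintype.card_fun,
        Fintype.card_fin, Fintype.card_fin]
    rw [← hconst]
    refine Finset.sum_congr rfl fun a _ => ?_
    convert key a using 2
    congr!
  rw [← Nat.cast_sum, hnum, Sym.card_sym_eq_choose, card_LHT]
  push_cast
  ring
end

section
/- A fixed d-tuple ((p_1,x_1),...,(p_d,x_d)) is contained in exactly p^(d(d-1)(p-1)) · ((p^(d-1)-1)!)^(dp) Orthogonal d-trials on [p]×[p^(d-1)]. -/
/-- Points of the `d`-dimensional parameter space on `n = p^d` values, each value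
written as a pair in `[p] × [p^(d-1)]`. -/
abbrev OPoint (p d : ℕ) := Fin d → Fin p × Fin (p ^ (d - 1))

/-- An Orthogonal `d`-trial on `[p] × [p^(d-1)]`: a Latin Hypercube `d`-trial
(each of the `d` coordinate projections of the multiset of `p^d` rows is a
permutation of the `p^d` values) such that every `(p_1,…,p_d) ∈ [p]^d` occurs
exactly once as the tuple of first components of a row. -/
def IsOrthTrial {p d : ℕ} (H : Sym (OPoint p d) (p ^ d)) : Prop :=
  (∀ i : Fin d, (H : Multiset (OPoint p d)).map (fun r => r i)
      = (Finset.univ : Finset (Fin p × Fin (p ^ (d - 1)))).val) ∧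
  (H : Multiset (OPoint p d)).map (fun r => fun i => (r i).1)
      = (Finset.univ : Finset (Fin d → Fin p)).val

instance {p d : ℕ} : DecidablePred (IsOrthTrial (p := p) (d := d)) := fun H => by
  unfold IsOrthTrial; infer_instance

/-- The finset of all Orthogonal `d`-trials on `[p] × [p^(d-1)]`. -/
def OrthTrial (p d : ℕ) : Finset (Sym (OPoint p d) (p ^ d)) :=
  Finset.univ.filter IsOrthTrial

namespace OrthAux

variable {p d : ℕ}

/-- Families of fiberwise equivalences parametrizing orthogonal trials. -/
def EFam (p d : ℕ) :=
  ∀ (i : Fin d) (v : Fin p), {q : Fin d → Fin p // q i = v} ≃ Fin (p ^ (d - 1))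

noncomputable instance : Fintype (EFam p d) := by unfold EFam; classical infer_instance

def gE (E : EFam p d) (i : Fin d) : (Fin d → Fin p) ≃ Fin p × Fin (p ^ (d - 1)) :=
  (Equiv.sigmaFiberEquiv (fun q : Fin d → Fin p => q i)).symm.trans
    ((Equiv.sigmaCongrRight (E i)).trans (Equiv.sigmaEquivProd _ _))

lemma gE_apply (E : EFam p d) (i : Fin d) (q : Fin d → Fin p) :
    gE E i q = (q i, E i (q i) ⟨q, rfl⟩) := rfl

def row (E : EFam p d) (q : Fin d → Fin p) : OPoint p d := fun i => gE E i q

def trial (E : EFam p d) : Sym (OPoint p d) (p ^ d) :=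
  ⟨Multiset.map (row E) Finset.univ.val, by simp⟩

lemma map_equiv_univ_val {α β : Type*} [Fintype α] [Fintype β] (e : α ≃ β) :
    Multiset.map e (Finset.univ : Finset α).val = (Finset.univ : Finset β).val := by
  have h := congrArg Finset.val (Finset.map_univ_equiv e)
  rw [Finset.map_val] at h
  exact h

lemma isOrth_trial (E : EFam p d) : IsOrthTrial (trial E) := by
  constructor
  · intro i
    show (Multiset.map (row E) Finset.univ.val).map (fun r => r i) = _
    rw [Multiset.map_map]
    exact map_equiv_univ_val (gE E i)
  · show (Multiset.map (row E) Finset.univ.val).map (fun r => fun i => (r i).1) = _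
    rw [Multiset.map_map]
    have h : ((fun (r : OPoint p d) => fun i => (r i).1) ∘ row E) = id := rfl
    rw [h, Multiset.map_id]

lemma trial_inj : Function.Injective (trial (p := p) (d := d)) := by
  intro E E' h
  have hm : Multiset.map (row E) Finset.univ.val = Multiset.map (row E') Finset.univ.val :=
    congrArg Subtype.val h
  have hrow : row E = row E' := by
    funext q
    have hmem : row E' q ∈ Multiset.map (row E) Finset.univ.val := by
      rw [hm]; exact Multiset.mem_map_of_mem _ (Finset.mem_univ q)
    obtain ⟨q', -, hq'⟩ := Multiset.mem_map.mp hmem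
    have hq : q' = q := by
      funext i
      exact congrArg (fun r => (r i).1) hq'
    rw [← hq', hq]
  funext i v
  apply Equiv.ext
  rintro ⟨q, hqv⟩
  subst hqv
  exact congrArg (fun r => (r i).2) (congrFun hrow q)

lemma card_fiber (p d : ℕ) (i : Fin d) (v : Fin p) :
    Fintype.card {q : Fin d → Fin p // q i = v} = p ^ (d - 1) := by
  have e : {q : Fin d → Fin p // q i = v} ≃ ({j : Fin d // ¬ j = i} → Fin p) :=
    (Equiv.subtypeEquiv (Equiv.refl _) (fun q => by
      constructor
      · intro h
        show q ∘ _ = _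
        funext j
        obtain ⟨j, hj⟩ := j
        subst hj
        exact h
      · intro h
        exact congrFun h ⟨i, rfl⟩)).trans
      (Equiv.subtypePreimage (fun j : Fin d => j = i) (fun _ => v))
  rw [Fintype.card_congr e, Fintype.card_fun, Fintype.card_subtype_compl,
    Fintype.card_subtype_eq, Fintype.card_fin, Fintype.card_fin]

lemma trial_surj {H : Sym (OPoint p d) (p ^ d)} (hH : IsOrthTrial H) :
    ∃ E : EFam p d, trial E = H := by
  classical
  obtain ⟨h1, h2⟩ := hH
  set M : Multiset (OPoint p d) := (H : Multiset (OPoint p d)) with hMdef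
  have hnodupQ : (M.map (fun r => fun i => (r i).1)).Nodup := by
    rw [h2]; exact Finset.univ.nodup
  have hnodup : M.Nodup := Multiset.Nodup.of_map _ hnodupQ
  let T : Finset (OPoint p d) := ⟨M, hnodup⟩
  let φ : {r // r ∈ T} → (Fin d → Fin p) := fun r => fun i => (r.1 i).1
  have hφinj : Function.Injective φ := by
    rintro ⟨x, hx⟩ ⟨y, hy⟩ hxy
    exact Subtype.ext (Multiset.inj_on_of_nodup_map hnodupQ x hx y hy hxy)
  have hφbij : Function.Bijective φ := by
    rw [Fintype.bijective_iff_injective_and_card]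
    refine ⟨hφinj, ?_⟩
    rw [Fintype.card_coe]
    show Multiset.card M = Fintype.card (Fin d → Fin p)
    have hcM : Multiset.card M = p ^ d := H.2
    rw [hcM]
    simp
  let e := Equiv.ofBijective φ hφbij
  let f : (Fin d → Fin p) → OPoint p d := fun q => (e.symm q).1
  have hffst : ∀ q i, (f q i).1 = q i := by
    intro q i
    have h := e.apply_symm_apply q
    exact congrFun h i
  have hfM : Multiset.map f Finset.univ.val = M := by
    calc Multiset.map f Finset.univ.val
        = Multiset.map Subtype.val (Multiset.map e.symm Finset.univ.val) := by
          rw [Multiset.map_map]; rfl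
      _ = Multiset.map Subtype.val (Finset.univ : Finset {r // r ∈ T}).val := by
          rw [map_equiv_univ_val e.symm]
      _ = M := by
          rw [Finset.univ_eq_attach]
          show Multiset.map Subtype.val M.attach = M
          exact Multiset.attach_map_val M
  have h1' : ∀ i : Fin d,
      Multiset.map (fun q => f q i) (Finset.univ : Finset (Fin d → Fin p)).val
        = (Finset.univ : Finset (Fin p × Fin (p ^ (d - 1)))).val := by
    intro i
    have h := h1 i
    rw [← hfM, Multiset.map_map] at h
    exact h
  have hinj_i : ∀ i : Fin d, Function.Injective (fun q => f q i) := by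
    intro i
    have hnd : (Multiset.map (fun q => f q i) Finset.univ.val).Nodup := by
      rw [h1' i]; exact Finset.univ.nodup
    intro x y hxy
    exact Multiset.inj_on_of_nodup_map hnd x (Finset.mem_univ x) y (Finset.mem_univ y) hxy
  have hψbij : ∀ (i : Fin d) (v : Fin p),
      Function.Bijective (fun s : {q : Fin d → Fin p // q i = v} => (f s.1 i).2) := by
    intro i v
    rw [Fintype.bijective_iff_injective_and_card]
    constructor
    · rintro ⟨x, hx⟩ ⟨y, hy⟩ hxy
      apply Subtype.ext
      apply hinj_i i
      exact Prod.ext (by rw [hffst x i, hffst y i, hx, hy]) hxy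
    · rw [card_fiber, Fintype.card_fin]
  refine ⟨fun i v => Equiv.ofBijective _ (hψbij i v), ?_⟩
  apply Subtype.ext
  show Multiset.map (row (fun i v => Equiv.ofBijective _ (hψbij i v))) Finset.univ.val = M
  have hrowf : row (fun i v => Equiv.ofBijective _ (hψbij i v)) = f := by
    funext q i
    show (q i, (f q i).2) = f q i
    rw [← hffst q i]
  rw [hrowf, hfM]

/-- Cardinality of equivalences with a prescribed value at one point. -/
lemma card_equiv_fix {α β : Type*} [Fintype α] [Fintype β] [DecidableEq α] [DecidableEq β]
    (h : Fintype.card α = Fintype.card β) (x : α) (y : β) :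
    Fintype.card {e : α ≃ β // e x = y} = (Fintype.card α - 1).factorial := by
  let Φ1 : {e : α ≃ β // e x = y} ≃ {e' : Option {x' : α // x' ≠ x} ≃ β // e' none = y} :=
    { toFun := fun e => ⟨(Equiv.optionSubtypeNe x).trans e.1, by
        rw [Equiv.trans_apply, Equiv.optionSubtypeNe_none]; exact e.2⟩
      invFun := fun e' => ⟨(Equiv.optionSubtypeNe x).symm.trans e'.1, by
        rw [Equiv.trans_apply, Equiv.optionSubtypeNe_symm_self]; exact e'.2⟩
      left_inv := fun e => by
        apply Subtype.ext; apply Equiv.ext; intro z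
        simp only [Equiv.trans_apply, Equiv.apply_symm_apply, Equiv.symm_apply_apply]
      right_inv := fun e' => by
        apply Subtype.ext; apply Equiv.ext; intro z
        simp only [Equiv.trans_apply, Equiv.apply_symm_apply, Equiv.symm_apply_apply] }
  let Φ := Φ1.trans (Equiv.optionSubtype y)
  rw [Fintype.card_congr Φ]
  have hx : Fintype.card {x' : α // x' ≠ x} = Fintype.card α - 1 := by
    rw [Fintype.card_subtype_compl, Fintype.card_subtype_eq]
  have hy : Fintype.card {y' : β // y' ≠ y} = Fintype.card β - 1 := by
    rw [Fintype.card_subtype_compl, Fintype.card_subtype_eq]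
  have hne : Fintype.card {x' : α // x' ≠ x} = Fintype.card {y' : β // y' ≠ y} := by
    rw [hx, hy, h]
  rw [Fintype.card_equiv (Fintype.equivOfCardEq hne), hx]

lemma card_pi_fix {ι : Type*} [Fintype ι] [DecidableEq ι] (T : ι → Type*) [∀ v, Fintype (T v)]
    [∀ v, DecidableEq (T v)] (v₀ : ι) (P : T v₀ → Prop) [DecidablePred P] :
    Fintype.card {g : ∀ v, T v // P (g v₀)}
      = Fintype.card {t : T v₀ // P t} * ∏ v : {v : ι // v ≠ v₀}, Fintype.card (T v.1) := by
  let e1 : {g : ∀ v, T v // P (g v₀)}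
      ≃ {x : (T v₀ × ∀ v : {v : ι // v ≠ v₀}, T v.1) // P x.1} :=
    Equiv.subtypeEquiv (Equiv.piSplitAt v₀ T) (fun g => Iff.rfl)
  let e2 : {x : (T v₀ × ∀ v : {v : ι // v ≠ v₀}, T v.1) // P x.1}
      ≃ {t : T v₀ // P t} × (∀ v : {v : ι // v ≠ v₀}, T v.1) :=
    { toFun := fun x => (⟨x.1.1, x.2⟩, x.1.2)
      invFun := fun y => ⟨(y.1.1, y.2), y.1.2⟩
      left_inv := fun _ => rfl
      right_inv := fun _ => rfl }
  rw [Fintype.card_congr (e1.trans e2), Fintype.card_prod, Fintype.card_pi]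

def cond (a : OPoint p d) (E : EFam p d) : Prop :=
  ∀ i : Fin d, E i ((a i).1) ⟨fun j => (a j).1, rfl⟩ = (a i).2

instance (a : OPoint p d) : DecidablePred (cond a) := fun E => by
  unfold cond; infer_instance

lemma mem_trial_iff (a : OPoint p d) (E : EFam p d) :
    a ∈ (trial E : Multiset (OPoint p d)) ↔ cond a E := by
  have hcoe : (trial E : Multiset (OPoint p d)) = Multiset.map (row E) Finset.univ.val := rfl
  rw [hcoe]
  constructor
  · intro h
    obtain ⟨q, -, hq⟩ := Multiset.mem_map.mp h
    have hq0 : q = fun j => (a j).1 := by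
      funext j
      exact congrArg (fun r => (r j).1) hq
    subst hq0
    intro i
    exact congrArg (fun r => r.2) (congrFun hq i)
  · intro h
    apply Multiset.mem_map.mpr
    refine ⟨fun j => (a j).1, Finset.mem_univ _, ?_⟩
    funext i
    show ((a i).1, E i ((a i).1) ⟨fun j => (a j).1, rfl⟩) = a i
    rw [h i]

end OrthAux

open OrthAux in
/-- a fixed `d`-tuple `((p_1,x_1),…,(p_d,x_d))` is contained in exactly
`p^(d(d-1)(p-1)) · ((p^(d-1)-1)!)^(dp)` Orthogonal `d`-trials on `[p] × [p^(d-1)]`. -/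
theorem number_of_orthogonal_trials_containing_tuple (p d : ℕ) (hp : 1 ≤ p) (hd : 1 ≤ d)
    (a : OPoint p d) :
    ((OrthTrial p d).filter (fun H : Sym (OPoint p d) (p ^ d) =>
        a ∈ (H : Multiset (OPoint p d)))).card
      = p ^ (d * (d - 1) * (p - 1)) * (p ^ (d - 1) - 1).factorial ^ (d * p) := by
  classical
  have hbij : (Finset.univ : Finset {E : EFam p d // cond a E}).card
      = ((OrthTrial p d).filter (fun H : Sym (OPoint p d) (p ^ d) =>
          a ∈ (H : Multiset (OPoint p d)))).card := by
    apply Finset.card_bij (fun E _ => trial E.1)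
    · intro E _
      simp only [Finset.mem_filter, OrthTrial, Finset.mem_univ, true_and]
      exact ⟨isOrth_trial E.1, (mem_trial_iff a E.1).mpr E.2⟩
    · intro E _ E' _ h
      exact Subtype.ext (trial_inj h)
    · intro H hH
      simp only [Finset.mem_filter, OrthTrial, Finset.mem_univ, true_and] at hH
      obtain ⟨hOrth, hmem⟩ := hH
      obtain ⟨E, hE⟩ := trial_surj hOrth
      exact ⟨⟨E, (mem_trial_iff a E).mp (hE ▸ hmem)⟩, Finset.mem_univ _, hE⟩
  rw [← hbij, Finset.card_univ]
  -- compute the cardinality of the parametrizing subtype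
  have hstep : Fintype.card {E : EFam p d // cond a E}
      = ((p ^ (d - 1) - 1).factorial
          * (p ^ (d - 1)).factorial ^ (p - 1)) ^ d := by
    have h0 : Fintype.card {E : EFam p d // cond a E}
        = Fintype.card (∀ i : Fin d,
            {g : ∀ v : Fin p, ({q : Fin d → Fin p // q i = v} ≃ Fin (p ^ (d - 1))) //
              g ((a i).1) ⟨fun j => (a j).1, rfl⟩ = (a i).2}) :=
      Fintype.card_congr (Equiv.subtypePiEquivPi
        (β := fun i : Fin d => ∀ v : Fin p, ({q : Fin d → Fin p // q i = v} ≃ Fin (p ^ (d - 1))))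
        (p := fun i g => g ((a i).1) ⟨fun j => (a j).1, rfl⟩ = (a i).2))
    rw [h0, Fintype.card_pi]
    have hterm : ∀ i : Fin d,
        Fintype.card {g : ∀ v : Fin p, ({q : Fin d → Fin p // q i = v} ≃ Fin (p ^ (d - 1))) //
            g ((a i).1) ⟨fun j => (a j).1, rfl⟩ = (a i).2}
          = (p ^ (d - 1) - 1).factorial * (p ^ (d - 1)).factorial ^ (p - 1) := by
      intro i
      rw [card_pi_fix (fun v => ({q : Fin d → Fin p // q i = v} ≃ Fin (p ^ (d - 1))))
        ((a i).1) (fun e => e ⟨fun j => (a j).1, rfl⟩ = (a i).2)]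
      have hc1 : Fintype.card
          {e : {q : Fin d → Fin p // q i = (a i).1} ≃ Fin (p ^ (d - 1)) //
            e ⟨fun j => (a j).1, rfl⟩ = (a i).2}
          = (p ^ (d - 1) - 1).factorial := by
        rw [card_equiv_fix (by rw [card_fiber, Fintype.card_fin]), card_fiber]
      rw [hc1]
      congr 1
      have hc2 : ∀ v : {v : Fin p // v ≠ (a i).1},
          Fintype.card ({q : Fin d → Fin p // q i = v.1} ≃ Fin (p ^ (d - 1)))
            = (p ^ (d - 1)).factorial := by
        intro v
        rw [Fintype.card_equiv (Fintype.equivFinOfCardEq (card_fiber p d i v.1)), card_fiber]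
      rw [Finset.prod_congr rfl (fun v _ => hc2 v), Finset.prod_const, Finset.card_univ]
      congr 1
      rw [Fintype.card_subtype_compl, Fintype.card_subtype_eq, Fintype.card_fin]
    rw [Finset.prod_congr rfl (fun i _ => hterm i), Finset.prod_const, Finset.card_univ,
      Fintype.card_fin]
  rw [hstep]
  -- final arithmetic
  obtain ⟨p', rfl⟩ : ∃ p', p = p' + 1 := ⟨p - 1, (Nat.succ_pred_eq_of_pos hp).symm⟩
  obtain ⟨d', rfl⟩ : ∃ d', d = d' + 1 := ⟨d - 1, (Nat.succ_pred_eq_of_pos hd).symm⟩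
  simp only [Nat.add_sub_cancel]
  have hNpos : 0 < (p' + 1) ^ d' := Nat.pow_pos (Nat.succ_pos p')
  rw [← Nat.mul_factorial_pred hNpos.ne']
  ring_nf
end

section
/- The expected number of d-tuples common to all members of a uniformly random multiset of m Orthogonal d-trials on [p]×[p^(d-1)] equals p^(d²) · binomial(p^(d(d-1)(p-1)) ((p^(d-1)-1)!)^(dp) + m - 1, m) / binomial(((p^(d-1))!)^(dp) + m - 1, m). -/
/-- The type of Orthogonal `d`-trials on `[p] × [p^(d-1)]`. -/
abbrev OT (p d : ℕ) := {H : Sym (OPoint p d) (p ^ d) // IsOrthTrial H}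

lemma map_univ_val_eq {α β : Type*} [Fintype α] [Fintype β] [DecidableEq β]
    (h : Fintype.card α = Fintype.card β) {g : α → β} (hg : Function.Injective g) :
    (Finset.univ : Finset α).val.map g = (Finset.univ : Finset β).val := by
  have hn : (Finset.univ.val.map g).Nodup := (Finset.univ.nodup).map hg
  have : (⟨Finset.univ.val.map g, hn⟩ : Finset β) = Finset.univ := by
    apply Finset.eq_univ_of_card
    simp [h]
  exact congrArg Finset.val this

abbrev GoodR (p d : ℕ) := {R : (Fin d → Fin p) → (Fin d → Fin (p ^ (d - 1))) //
  ∀ i : Fin d, Function.Injective (fun f : Fin d → Fin p => ((f i, R f i) : Fin p × Fin (p ^ (d - 1))))}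

lemma card_fun_prod (p d : ℕ) (hd : 1 ≤ d) :
    Fintype.card (Fin d → Fin p) = Fintype.card (Fin p × Fin (p ^ (d - 1))) := by
  simp only [Fintype.card_fun, Fintype.card_fin, Fintype.card_prod]
  rw [← pow_succ', Nat.sub_add_cancel hd]

def Phi (p d : ℕ) (hd : 1 ≤ d) (R : GoodR p d) : OT p d := by
  refine ⟨⟨Multiset.map (fun f i => ((f i, R.1 f i) : Fin p × Fin (p ^ (d - 1)))) Finset.univ.val,
    ?_⟩, ?_, ?_⟩
  · rw [Multiset.card_map]
    show Finset.univ.card = _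
    simp
  · intro i
    show (Multiset.map _ _).map _ = _
    rw [Multiset.map_map]
    exact map_univ_val_eq (card_fun_prod p d hd) (R.2 i)
  · show (Multiset.map _ _).map _ = _
    rw [Multiset.map_map]
    exact map_univ_val_eq rfl (fun f g h => h)

lemma Phi_injective (p d : ℕ) (hd : 1 ≤ d) : Function.Injective (Phi p d hd) := by
  intro R R' h
  have hm : Multiset.map (fun f i => ((f i, R.1 f i) : Fin p × Fin (p ^ (d - 1)))) Finset.univ.val
      = Multiset.map (fun f i => ((f i, R'.1 f i) : Fin p × Fin (p ^ (d - 1)))) Finset.univ.val :=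
    congrArg (fun H : OT p d => (H.1 : Multiset (OPoint p d))) h
  apply Subtype.ext
  funext f
  have hf : (fun i => ((f i, R.1 f i) : Fin p × Fin (p ^ (d - 1)))) ∈
      Multiset.map (fun f i => ((f i, R'.1 f i) : Fin p × Fin (p ^ (d - 1)))) Finset.univ.val := by
    rw [← hm]
    exact Multiset.mem_map.mpr ⟨f, by simp, rfl⟩
  obtain ⟨g, _, hg⟩ := Multiset.mem_map.mp hf
  have hfg : g = f := by
    funext i
    exact congrArg Prod.fst (congrFun hg i)
  subst hfg
  funext i
  exact (congrArg Prod.snd (congrFun hg i)).symm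

lemma Phi_surjective (p d : ℕ) (hd : 1 ≤ d) : Function.Surjective (Phi p d hd) := by
  intro H
  -- for each f there is a row of H with first components f
  have hmem : ∀ f : Fin d → Fin p, ∃ r, r ∈ (H.1 : Multiset (OPoint p d)) ∧
      (fun i => (r i).1) = f := by
    intro f
    have : f ∈ (H.1 : Multiset (OPoint p d)).map (fun r => fun i => (r i).1) := by
      rw [H.2.2]; simp
    obtain ⟨r, hr, hr2⟩ := Multiset.mem_map.mp this
    exact ⟨r, hr, hr2⟩
  choose row hrow hrow1 using hmem
  refine ⟨⟨fun f i => (row f i).2, ?_⟩, ?_⟩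
  · -- injectivity conditions
    intro i f g hfg
    have hnodup : ((H.1 : Multiset (OPoint p d)).map (fun r => r i)).Nodup := by
      rw [H.2.1 i]; exact Finset.univ.nodup
    have := Multiset.inj_on_of_nodup_map hnodup _ (hrow f) _ (hrow g) ?_
    · -- row f = row g → f = g
      rw [← hrow1 f, ← hrow1 g, this]
    · -- (row f) i = (row g) i
      have hfg' : ((f i, (row f i).2) : Fin p × Fin (p ^ (d - 1)))
          = (g i, (row g i).2) := hfg
      rw [Prod.mk.injEq] at hfg'
      obtain ⟨h1, h2⟩ := hfg'
      have hf1 : (row f i).1 = f i := congrFun (hrow1 f) i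
      have hg1 : (row g i).1 = g i := congrFun (hrow1 g) i
      exact Prod.ext (by rw [hf1, hg1, h1]) h2
  · -- Phi of it equals H
    apply Subtype.ext
    apply Sym.coe_injective
    show Multiset.map _ Finset.univ.val = _
    have hrw : (fun f => fun i => ((f i, (row f i).2) : Fin p × Fin (p ^ (d - 1)))) = row := by
      funext f i
      exact Prod.ext (congrFun (hrow1 f) i).symm rfl
    rw [hrw]
    -- map row univ.val = H.1
    have hnodupH : (H.1 : Multiset (OPoint p d)).Nodup := by
      have : ((H.1 : Multiset (OPoint p d)).map (fun r => fun i => (r i).1)).Nodup := by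
        rw [H.2.2]; exact Finset.univ.nodup
      exact Multiset.Nodup.of_map _ this
    have hrowinj : Function.Injective row := by
      intro f g h
      rw [← hrow1 f, ← hrow1 g, h]
    have hsub : Multiset.map row Finset.univ.val ⊆ (H.1 : Multiset (OPoint p d)) := by
      intro x hx
      obtain ⟨f, _, rfl⟩ := Multiset.mem_map.mp hx
      exact hrow f
    have hle : Multiset.map row Finset.univ.val ≤ (H.1 : Multiset (OPoint p d)) :=
      (Multiset.le_iff_subset ((Finset.univ.nodup).map hrowinj)).mpr hsub
    refine Multiset.eq_of_le_of_card_le hle ?_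
    rw [Multiset.card_map]
    have : Multiset.card (H.1 : Multiset (OPoint p d)) = p ^ d := H.1.2
    rw [this]
    show p ^ d ≤ Finset.univ.card
    simp

lemma card_fiber (p d : ℕ) (i : Fin d) (v : Fin p) :
    Fintype.card {f : Fin d → Fin p // f i = v} = p ^ (d - 1) := by
  have e : {f : Fin d → Fin p // f i = v} ≃ ({j : Fin d // j ≠ i} → Fin p) :=
    { toFun := fun f j => f.1 j.1
      invFun := fun g => ⟨fun j => if h : j = i then v else g ⟨j, h⟩, by simp⟩
      left_inv := by
        rintro ⟨f, hf⟩
        ext j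
        by_cases h : j = i
        · subst h; simp [hf]
        · simp [h]
      right_inv := by
        intro g
        funext j
        simp [j.2] }
  rw [Fintype.card_congr e]
  have : Fintype.card {j : Fin d // j ≠ i} = d - 1 := by
    rw [Fintype.card_subtype_compl, Fintype.card_subtype_eq]
    simp
  simp [this]

noncomputable def e2 (p d : ℕ) : GoodR p d ≃
    ((iv : Fin d × Fin p) → ({f : Fin d → Fin p // f iv.1 = iv.2} ≃ Fin (p ^ (d - 1)))) where
  toFun R iv := Equiv.ofBijective (fun x => R.1 x.1 iv.1) (by
    rw [Fintype.bijective_iff_injective_and_card]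
    constructor
    · rintro ⟨f, hf⟩ ⟨g, hg⟩ h
      simp only at h
      have := R.2 iv.1 (a₁ := f) (a₂ := g) (by
        show ((f iv.1, R.1 f iv.1) : Fin p × Fin (p ^ (d-1))) = (g iv.1, R.1 g iv.1)
        rw [Prod.mk.injEq]
        exact ⟨hf.trans hg.symm, h⟩)
      exact Subtype.ext this
    · rw [card_fiber]; simp)
  invFun E := ⟨fun f i => E (i, f i) ⟨f, rfl⟩, by
    intro i f g hfg
    have h1 : f i = g i := congrArg Prod.fst hfg
    have h2 : E (i, f i) ⟨f, rfl⟩ = E (i, g i) ⟨g, rfl⟩ := congrArg Prod.snd hfg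
    have congrE : ∀ (x : Fin d → Fin p) (v w : Fin p) (h : v = w) (hf : x i = v),
        E (i, v) ⟨x, hf⟩ = E (i, w) ⟨x, hf.trans h⟩ := by
      rintro x v w rfl hf; rfl
    rw [congrE f (f i) (g i) h1 rfl] at h2
    have := (E (i, g i)).injective h2
    exact congrArg Subtype.val this⟩
  left_inv R := Subtype.ext rfl
  right_inv E := by
    funext iv
    obtain ⟨i, v⟩ := iv
    apply Equiv.ext
    rintro ⟨f, hf⟩
    show E (i, f i) ⟨f, rfl⟩ = E (i, v) ⟨f, hf⟩
    have congrE : ∀ (x : Fin d → Fin p) (v w : Fin p) (h : v = w) (hx : x i = v),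
        E (i, v) ⟨x, hx⟩ = E (i, w) ⟨x, hx.trans h⟩ := by
      rintro x v w rfl hx; rfl
    exact congrE f (f i) v hf rfl

lemma cardOT (p d : ℕ) (hd : 1 ≤ d) :
    Fintype.card (OT p d) = (p ^ (d - 1)).factorial ^ (d * p) := by
  have h1 : Fintype.card (OT p d) = Fintype.card (GoodR p d) :=
    (Fintype.card_congr (Equiv.ofBijective (Phi p d hd)
      ⟨Phi_injective p d hd, Phi_surjective p d hd⟩)).symm
  rw [h1, Fintype.card_congr (e2 p d), Fintype.card_pi]
  have : ∀ iv : Fin d × Fin p,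
      Fintype.card ({f : Fin d → Fin p // f iv.1 = iv.2} ≃ Fin (p ^ (d - 1)))
        = (p ^ (d - 1)).factorial := by
    intro iv
    rw [Fintype.card_equiv (Fintype.equivOfCardEq (by rw [card_fiber]; simp)), card_fiber]
  rw [Finset.prod_congr rfl (fun iv _ => this iv), Finset.prod_const]
  simp [mul_comm]

lemma mem_Phi (p d : ℕ) (hd : 1 ≤ d) (R : GoodR p d) (a : OPoint p d) :
    a ∈ ((Phi p d hd R).1 : Multiset (OPoint p d))
      ↔ ∀ i, R.1 (fun j => (a j).1) i = (a i).2 := by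
  show a ∈ Multiset.map _ Finset.univ.val ↔ _
  rw [Multiset.mem_map]
  constructor
  · rintro ⟨f, _, rfl⟩
    intro i
    rfl
  · intro h
    exact ⟨fun j => (a j).1, by simp, funext fun i => Prod.ext rfl (h i)⟩
/-- Equivalences fixing a point correspond to equivalences of complements. -/
def fixEquiv {α β : Type*} [DecidableEq α] [DecidableEq β] (x₀ : α) (y₀ : β) :
    {e : α ≃ β // e x₀ = y₀} ≃ ({z : α // z ≠ x₀} ≃ {w : β // w ≠ y₀}) where
  toFun e := Equiv.subtypeEquiv e.1 (fun z => by
    constructor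
    · intro hz h
      exact hz (e.1.injective (h.trans e.2.symm))
    · intro h hz
      exact h (by rw [hz, e.2]))
  invFun e' := by
    refine ⟨((Equiv.sumCompl (· = x₀)).symm.trans
      ((Equiv.sumCongr (⟨fun _ => ⟨y₀, rfl⟩, fun _ => ⟨x₀, rfl⟩,
        fun z => Subtype.ext z.2.symm, fun w => Subtype.ext w.2.symm⟩ :
          {z : α // z = x₀} ≃ {w : β // w = y₀}) e').trans
        (Equiv.sumCompl (· = y₀)))), ?_⟩
    simp [Equiv.sumCompl_symm_apply_of_pos rfl]
  left_inv := by
    rintro ⟨e, he⟩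
    ext z
    simp only
    by_cases h : z = x₀
    · subst h
      simp [Equiv.sumCompl_symm_apply_of_pos rfl, he]
    · simp only [Equiv.trans_apply]
      rw [Equiv.sumCompl_symm_apply_of_neg (p := (· = x₀)) (a := z) h]
      simp [Equiv.subtypeEquiv]
  right_inv := by
    intro e'
    ext z
    simp only [Equiv.subtypeEquiv, Equiv.trans_apply, Equiv.coe_fn_mk]
    rw [Equiv.sumCompl_symm_apply_of_neg (p := (· = x₀)) (a := z.1) z.2]
    simp

lemma card_fix {α β : Type*} [Fintype α] [Fintype β] [DecidableEq α] [DecidableEq β]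
    (h : Fintype.card α = Fintype.card β) (x₀ : α) (y₀ : β) :
    Fintype.card {e : α ≃ β // e x₀ = y₀} = (Fintype.card α - 1).factorial := by
  rw [Fintype.card_congr (fixEquiv x₀ y₀)]
  have hc : Fintype.card {z : α // z ≠ x₀} = Fintype.card {w : β // w ≠ y₀} := by
    rw [Fintype.card_subtype_compl, Fintype.card_subtype_compl,
      Fintype.card_subtype_eq, Fintype.card_subtype_eq, h]
  rw [Fintype.card_equiv (Fintype.equivOfCardEq hc)]
  congr 1
  rw [Fintype.card_subtype_compl, Fintype.card_subtype_eq]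

lemma arith (p d : ℕ) (hp : 1 ≤ p) :
    ((p ^ (d - 1) - 1).factorial * (p ^ (d - 1)).factorial ^ (p - 1)) ^ d
      = p ^ (d * (d - 1) * (p - 1)) * ((p ^ (d - 1) - 1).factorial) ^ (d * p) := by
  set a := (p ^ (d - 1) - 1).factorial with ha
  have hq : (p ^ (d - 1)).factorial = p ^ (d - 1) * a := by
    rw [ha]; exact (Nat.mul_factorial_pred (pow_pos hp _).ne').symm
  rw [hq]
  have h1 : 1 + (p - 1) = p := by omega
  have h2 : (a * (p ^ (d - 1) * a) ^ (p - 1)) ^ d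
      = a ^ ((1 + (p - 1)) * d) * p ^ ((d - 1) * ((p - 1) * d)) := by ring
  rw [h2, h1]
  rw [mul_comm (a ^ (p * d)) _]
  congr 1
  · congr 1
    ring
  · congr 1
    ring

lemma cardMem (p d : ℕ) (hp : 1 ≤ p) (hd : 1 ≤ d) (a : OPoint p d) :
    (Finset.univ.filter (fun H : OT p d =>
        a ∈ ((H : OT p d).1 : Multiset (OPoint p d)))).card
      = p ^ (d * (d - 1) * (p - 1)) * ((p ^ (d - 1) - 1).factorial) ^ (d * p) := by
  classical
  rw [← Fintype.card_subtype]
  set A : Fin d → Fin p := fun j => (a j).1 with hA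
  set Q : (iv : Fin d × Fin p) → ({f : Fin d → Fin p // f iv.1 = iv.2} ≃ Fin (p ^ (d - 1))) → Prop :=
    fun iv e => ∀ x : {f : Fin d → Fin p // f iv.1 = iv.2}, x.1 = A → e x = (a iv.1).2 with hQ
  have e1 : {H : OT p d // a ∈ (H.1 : Multiset (OPoint p d))}
      ≃ {R : GoodR p d // ∀ i, R.1 A i = (a i).2} :=
    (Equiv.subtypeEquiv (Equiv.ofBijective (Phi p d hd)
      ⟨Phi_injective p d hd, Phi_surjective p d hd⟩)
      (fun R => (mem_Phi p d hd R a).symm)).symm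
  have e3 : {R : GoodR p d // ∀ i, R.1 A i = (a i).2}
      ≃ {E : (iv : Fin d × Fin p) → ({f : Fin d → Fin p // f iv.1 = iv.2} ≃ Fin (p ^ (d - 1))) //
          ∀ iv, Q iv (E iv)} := by
    refine Equiv.subtypeEquiv (e2 p d) (fun R => ?_)
    constructor
    · intro h iv x hx
      show R.1 x.1 iv.1 = (a iv.1).2
      rw [hx]
      exact h iv.1
    · intro h i
      exact h (i, A i) ⟨A, rfl⟩ rfl
  rw [Fintype.card_congr (e1.trans (e3.trans (Equiv.subtypePiEquivPi (p := Q)))),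
    Fintype.card_pi]
  have key : ∀ iv : Fin d × Fin p, Fintype.card {e // Q iv e}
      = if iv.2 = A iv.1 then (p ^ (d - 1) - 1).factorial else (p ^ (d - 1)).factorial := by
    intro iv
    by_cases h : iv.2 = A iv.1
    · rw [if_pos h]
      have hiff : ∀ e : ({f : Fin d → Fin p // f iv.1 = iv.2} ≃ Fin (p ^ (d - 1))),
          Q iv e ↔ e ⟨A, h.symm⟩ = (a iv.1).2 := by
        intro e
        constructor
        · intro hq; exact hq _ rfl
        · intro he x hx
          have : x = ⟨A, h.symm⟩ := Subtype.ext hx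
          rw [this]; exact he
      rw [Fintype.card_congr (Equiv.subtypeEquivRight hiff),
        card_fix (by rw [card_fiber]; simp) _ _, card_fiber]
    · rw [if_neg h]
      have hall : ∀ e : ({f : Fin d → Fin p // f iv.1 = iv.2} ≃ Fin (p ^ (d - 1))), Q iv e := by
        intro e x hx
        exfalso
        exact h (x.2 ▸ (hx ▸ rfl : x.1 iv.1 = A iv.1) ▸ rfl)
      rw [Fintype.card_congr (Equiv.subtypeUnivEquiv hall),
        Fintype.card_equiv (Fintype.equivOfCardEq (by rw [card_fiber]; simp)), card_fiber]
  rw [Finset.prod_congr rfl (fun iv _ => key iv), Fintype.prod_prod_type]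
  have inner : ∀ i : Fin d, (∏ v : Fin p,
      (if v = A i then (p ^ (d - 1) - 1).factorial else (p ^ (d - 1)).factorial))
        = (p ^ (d - 1) - 1).factorial * (p ^ (d - 1)).factorial ^ (p - 1) := by
    intro i
    rw [← Finset.mul_prod_erase Finset.univ _ (Finset.mem_univ (A i)), if_pos rfl]
    congr 1
    rw [Finset.prod_congr rfl (fun v hv => if_neg (Finset.ne_of_mem_erase hv)),
      Finset.prod_const, Finset.card_erase_of_mem (Finset.mem_univ _)]
    simp
  rw [Finset.prod_congr rfl (fun i _ => inner i), Finset.prod_const]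
  simpa using arith p d hp
lemma map_val_pmap_mk {γ : Type*} (p : γ → Prop) (t : Multiset γ) (H : ∀ x ∈ t, p x) :
    Multiset.map Subtype.val (Multiset.pmap (fun x hx => (⟨x, hx⟩ : {x // p x})) t H) = t := by
  simp [Multiset.pmap_eq_map_attach, Multiset.map_map, Function.comp]

lemma card_sym_filter {γ : Type*} [Fintype γ] [DecidableEq γ] (s : Finset γ) (m : ℕ) :
    (Finset.univ.filter (fun M : Sym γ m => ∀ x ∈ (M : Multiset γ), x ∈ s)).card
      = (s.card + m - 1).choose m := by
  classical
  rw [← Nat.multichoose_eq, ← Fintype.card_coe s, ← Sym.card_sym_eq_multichoose,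
    ← Finset.card_univ]
  refine Finset.card_bij'
    (fun M hM => (⟨Multiset.pmap (fun x hx => (⟨x, hx⟩ : {x // x ∈ s})) (M : Multiset γ)
        (by simpa using (Finset.mem_filter.mp hM).2), by simp [M.2]⟩ : Sym {x // x ∈ s} m))
    (fun N _ => Sym.map Subtype.val N) ?_ ?_ ?_ ?_
  · intro M hM; exact Finset.mem_univ _
  · intro N _
    refine Finset.mem_filter.mpr ⟨Finset.mem_univ _, ?_⟩
    intro x hx
    rw [show ((Sym.map Subtype.val N : Sym γ m) : Multiset γ)
        = Multiset.map Subtype.val (N : Multiset {x // x ∈ s}) from Sym.coe_map N _] at hx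
    obtain ⟨y, _, rfl⟩ := Multiset.mem_map.mp hx
    exact y.2
  · intro M hM
    apply Sym.coe_injective
    refine (Sym.coe_map _ _).trans ?_
    exact map_val_pmap_mk _ _ _
  · intro N hN
    apply Sym.coe_injective
    apply Multiset.map_injective (Subtype.val_injective)
    exact (map_val_pmap_mk _ _ _).trans (Sym.coe_map N _)


set_option maxHeartbeats 2000000 in
/-- the expected number of `d`-tuples common to all members of a
uniformly random multiset of `m` Orthogonal `d`-trials on `[p] × [p^(d-1)]` equals
`p^(d²) · C(p^(d(d-1)(p-1)) ((p^(d-1)-1)!)^(dp) + m - 1, m) / C(((p^(d-1))!)^(dp) + m - 1, m)`. -/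
theorem expected_intersection_orthogonal (p d m : ℕ) (hp : 1 ≤ p) (hd : 1 ≤ d) (hm : 1 ≤ m) :
    (∑ M : Sym (OT p d) m,
        ((Finset.univ.filter (fun a : OPoint p d =>
          ∀ H ∈ (M : Multiset (OT p d)),
            a ∈ ((H : OT p d).1 : Multiset (OPoint p d)))).card : ℚ))
      / (Fintype.card (Sym (OT p d) m) : ℚ)
    = (p : ℚ) ^ (d ^ 2)
        * ((p ^ (d * (d - 1) * (p - 1)) * (p ^ (d - 1) - 1).factorial ^ (d * p) + m - 1).choose m : ℚ)
        / (((p ^ (d - 1)).factorial ^ (d * p) + m - 1).choose m : ℚ) := by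
  set K := p ^ (d * (d - 1) * (p - 1)) * ((p ^ (d - 1) - 1).factorial) ^ (d * p) with hK
  have hden : Fintype.card (Sym (OT p d) m)
      = ((p ^ (d - 1)).factorial ^ (d * p) + m - 1).choose m := by
    rw [Sym.card_sym_eq_multichoose, Nat.multichoose_eq, cardOT p d hd]
  have hcardpt : Fintype.card (OPoint p d) = p ^ (d ^ 2) := by
    show Fintype.card (Fin d → Fin p × Fin (p ^ (d - 1))) = _
    simp only [Fintype.card_fun, Fintype.card_prod, Fintype.card_fin]
    rw [← pow_succ', Nat.sub_add_cancel hd, ← pow_mul, ← pow_two]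
  have hnum : (∑ M : Sym (OT p d) m, (Finset.univ.filter (fun a : OPoint p d =>
        ∀ H ∈ (M : Multiset (OT p d)),
          a ∈ ((H : OT p d).1 : Multiset (OPoint p d)))).card)
      = p ^ (d ^ 2) * (K + m - 1).choose m := by
    have step1 : ∀ M : Sym (OT p d) m, (Finset.univ.filter (fun a : OPoint p d =>
        ∀ H ∈ (M : Multiset (OT p d)),
          a ∈ ((H : OT p d).1 : Multiset (OPoint p d)))).card
        = ∑ a : OPoint p d, (if ∀ H ∈ (M : Multiset (OT p d)),
            a ∈ ((H : OT p d).1 : Multiset (OPoint p d)) then 1 else 0) :=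
      fun M => Finset.card_filter _ _
    rw [Finset.sum_congr rfl (fun M _ => step1 M), Finset.sum_comm]
    have step2 : ∀ a : OPoint p d, (∑ M : Sym (OT p d) m,
        (if ∀ H ∈ (M : Multiset (OT p d)),
            a ∈ ((H : OT p d).1 : Multiset (OPoint p d)) then 1 else 0))
        = (K + m - 1).choose m := by
      intro a
      rw [← Finset.card_filter]
      have hc := card_sym_filter
        (Finset.univ.filter (fun H : OT p d =>
          a ∈ ((H : OT p d).1 : Multiset (OPoint p d)))) m
      rw [cardMem p d hp hd a] at hc
      rw [← hc]
      congr 1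
      ext M
      simp only [Finset.mem_filter, Finset.mem_univ, true_and]
    rw [Finset.sum_congr rfl (fun a _ => step2 a), Finset.sum_const, Finset.card_univ,
      hcardpt, smul_eq_mul]
  have hcast : (∑ M : Sym (OT p d) m,
      ((Finset.univ.filter (fun a : OPoint p d =>
        ∀ H ∈ (M : Multiset (OT p d)),
          a ∈ ((H : OT p d).1 : Multiset (OPoint p d)))).card : ℚ))
      = ((p ^ (d ^ 2) * (K + m - 1).choose m : ℕ) : ℚ) := by
    rw [← hnum]
    push_cast
    rfl
  rw [hcast, hden, hK]
  push_cast
  ring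
end

section
/- The expected total number of edges (over all coordinate pairs 1 ≤ i < j ≤ d) common to all members of a uniformly random multiset of m Latin Hypercube d-trials on [n] equals n² · binomial(d,2) · binomial((n-1)!·(n!)^(d-2) + m - 1, m) / binomial((n!)^(d-1) + m - 1, m). -/
open Finset

/-! ### Auxiliary counting lemmas -/

lemma LH.card_perm_fix (n : ℕ) (a b : Fin n) :
    Fintype.card {τ : Equiv.Perm (Fin n) // τ a = b} = (n - 1).factorial := by
  have e1 : {τ : Equiv.Perm (Fin n) // τ a = b} ≃ {τ : Equiv.Perm (Fin n) // τ a = a} :=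
    Equiv.subtypeEquiv (Equiv.mulLeft (Equiv.swap a b)) (fun τ => by
      constructor
      · intro h
        simp [Equiv.Perm.mul_apply, h]
      · intro h
        have : Equiv.swap a b (τ a) = Equiv.swap a b b := by
          simpa [Equiv.Perm.mul_apply] using h
        exact (Equiv.swap a b).injective this)
  have e2 : Equiv.Perm {x : Fin n // x ≠ a} ≃ {τ : Equiv.Perm (Fin n) // τ a = a} :=
    (Equiv.Perm.subtypeEquivSubtypePerm (fun x => x ≠ a)).trans
      (Equiv.subtypeEquivRight (fun f => by
        constructor
        · intro h
          exact h a (by simp)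
        · intro h x hx
          have : x = a := by simpa using hx
          subst this; exact h))
  rw [Fintype.card_congr (e1.trans e2.symm), Fintype.card_perm]
  congr 1
  simp [Fintype.card_subtype_compl]

lemma LH.card_pi_one (d n : ℕ) (i : Fin d) :
    Fintype.card {σ : Fin d → Equiv.Perm (Fin n) // σ i = 1} = n.factorial ^ (d - 1) := by
  rw [Fintype.card_subtype]
  have h : univ.filter (fun σ : Fin d → Equiv.Perm (Fin n) => σ i = 1)
      = Fintype.piFinset (fun k => if k = i then {1} else univ) := by
    ext σ
    simp only [mem_filter, mem_univ, true_and, Fintype.mem_piFinset]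
    constructor
    · intro h k
      by_cases hk : k = i <;> simp [hk, h]
    · intro h
      simpa using h i
  rw [h, Fintype.card_piFinset]
  rw [← Finset.mul_prod_erase univ _ (mem_univ i)]
  rw [if_pos rfl]
  rw [Finset.prod_congr rfl (fun k hk => by rw [if_neg (Finset.ne_of_mem_erase hk)])]
  simp [Finset.card_erase_of_mem, Fintype.card_perm]

lemma LH.card_pi_two (d n : ℕ) (i j : Fin d) (hij : i ≠ j) (a b : Fin n) :
    Fintype.card {σ : Fin d → Equiv.Perm (Fin n) // σ i = 1 ∧ σ j a = b}
      = (n - 1).factorial * n.factorial ^ (d - 2) := by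
  rw [Fintype.card_subtype]
  have h : univ.filter (fun σ : Fin d → Equiv.Perm (Fin n) => σ i = 1 ∧ σ j a = b)
      = Fintype.piFinset (fun k => if k = i then {1} else
          if k = j then univ.filter (fun τ : Equiv.Perm (Fin n) => τ a = b) else univ) := by
    ext σ
    simp only [mem_filter, mem_univ, true_and, Fintype.mem_piFinset]
    constructor
    · rintro ⟨h1, h2⟩ k
      by_cases hk : k = i
      · simp [hk, h1]
      · by_cases hk2 : k = j
        · subst hk2; simp [hk, h2]
        · simp [hk, hk2]
    · intro h
      refine ⟨by simpa using h i, ?_⟩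
      have := h j
      rw [if_neg (Ne.symm hij), if_pos rfl] at this
      simpa using this
  rw [h, Fintype.card_piFinset]
  rw [← Finset.mul_prod_erase univ _ (mem_univ i)]
  rw [← Finset.mul_prod_erase _ _ (Finset.mem_erase.2 ⟨Ne.symm hij, mem_univ j⟩)]
  rw [if_pos rfl, if_neg (Ne.symm hij), if_pos rfl]
  rw [Finset.prod_congr rfl (fun k hk => by
    rw [if_neg (Finset.ne_of_mem_erase (Finset.mem_of_mem_erase hk)),
      if_neg (Finset.ne_of_mem_erase hk)])]
  have hcard : ((univ.erase i).erase j).card = d - 2 := by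
    rw [Finset.card_erase_of_mem (Finset.mem_erase.2 ⟨Ne.symm hij, mem_univ j⟩),
      Finset.card_erase_of_mem (mem_univ i)]
    simp; omega
  have hfix : (univ.filter (fun τ : Equiv.Perm (Fin n) => τ a = b)).card = (n - 1).factorial := by
    rw [← Fintype.card_subtype, LH.card_perm_fix]
  simp [Finset.prod_const, hcard, hfix, Fintype.card_perm]

/-! ### The canonical parametrization of Latin Hypercube trials -/

def LH.trialOf {n d : ℕ} (i : Fin d) (σ : {σ : Fin d → Equiv.Perm (Fin n) // σ i = 1}) :
    LHT n d :=
  ⟨⟨Finset.univ.val.map (fun a k => σ.1 k a), by simp⟩, by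
    intro k
    show Multiset.map _ (Multiset.map (fun a k => σ.1 k a) Finset.univ.val) = _
    rw [Multiset.map_map]
    exact Multiset.map_univ_val_equiv (σ.1 k)⟩

lemma LH.trialOf_bijective {n d : ℕ} (i : Fin d) :
    Function.Bijective (LH.trialOf (n := n) (d := d) i) := by
  constructor
  · intro σ τ h
    have hms : Finset.univ.val.map (fun a k => σ.1 k a)
        = Finset.univ.val.map (fun a k => τ.1 k a) :=
      congrArg (fun H : LHT n d => (H.1 : Multiset (Fin d → Fin n))) h
    apply Subtype.ext; funext k; apply Equiv.ext; intro a
    have hmem : (fun k => σ.1 k a) ∈ Finset.univ.val.map (fun a k => τ.1 k a) := by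
      rw [← hms]
      exact Multiset.mem_map.2 ⟨a, Finset.mem_def.1 (mem_univ a), rfl⟩
    obtain ⟨c, _, hc⟩ := Multiset.mem_map.1 hmem
    have hca : c = a := by
      have := congrFun hc i
      simpa [τ.2, σ.2] using this
    subst hca
    exact (congrFun hc k).symm
  · rintro ⟨⟨T, hTcard⟩, hH⟩
    have hHm : ∀ k : Fin d, T.map (fun r => r k) = (Finset.univ : Finset (Fin n)).val := hH
    have hex : ∀ a : Fin n, ∃ r, r ∈ T ∧ r i = a := by
      intro a
      have : a ∈ T.map (fun r => r i) := by
        rw [hHm i]; exact Finset.mem_def.1 (mem_univ a)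
      obtain ⟨r, hr, hra⟩ := Multiset.mem_map.1 this
      exact ⟨r, hr, hra⟩
    choose g hg1 hg2 using hex
    have huniq : ∀ r ∈ T, ∀ r' ∈ T, r i = r' i → r = r' := by
      intro r hr r' hr' hrr
      by_contra hne
      have h1 : Multiset.count (r i) (T.map (fun s => s i)) = 1 := by
        rw [hHm i]; exact Multiset.count_univ _
      rw [Multiset.count_map] at h1
      have hrf : r ∈ T.filter (fun s => r i = s i) := Multiset.mem_filter.2 ⟨hr, rfl⟩
      have hrf' : r' ∈ (T.filter (fun s => r i = s i)).erase r :=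
        (Multiset.mem_erase_of_ne (Ne.symm hne)).2 (Multiset.mem_filter.2 ⟨hr', hrr⟩)
      have h3 : 0 < Multiset.card ((T.filter (fun s => r i = s i)).erase r) :=
        Multiset.card_pos_iff_exists_mem.2 ⟨r', hrf'⟩
      have h4 : Multiset.card ((T.filter (fun s => r i = s i)).erase r)
          = Multiset.card (T.filter (fun s => r i = s i)) - 1 :=
        Multiset.card_erase_of_mem hrf
      rw [h1] at h4
      norm_num at h4
      rw [h4] at h3
      exact lt_irrefl 0 h3
    have hmap : Finset.univ.val.map g = T := by
      have e1 : T.map (fun r => g (r i)) = T.map id :=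
        Multiset.map_congr rfl (fun r hr => huniq _ (hg1 _) _ hr (hg2 _))
      have e2 : T.map (fun r => g (r i)) = (T.map (fun r => r i)).map g := by
        rw [Multiset.map_map]; rfl
      rw [← hHm i, ← e2, e1, Multiset.map_id]
    have hbij : ∀ k : Fin d, Function.Bijective (fun a => g a k) := by
      intro k
      have hmm : Finset.univ.val.map (fun a => g a k) = (Finset.univ : Finset (Fin n)).val := by
        have : Finset.univ.val.map (fun a => g a k)
            = (Finset.univ.val.map g).map (fun r => r k) := by
          rw [Multiset.map_map]; rfl
        rw [this, hmap, hHm k]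
      have hnd : (Finset.univ.val.map (fun a => g a k)).Nodup := by
        rw [hmm]; exact Finset.univ.nodup
      have hinj : Function.Injective (fun a => g a k) := fun x y hxy =>
        Multiset.inj_on_of_nodup_map hnd x (Finset.mem_def.1 (mem_univ x)) y
          (Finset.mem_def.1 (mem_univ y)) hxy
      exact Finite.injective_iff_bijective.1 hinj
    refine ⟨⟨fun k => Equiv.ofBijective _ (hbij k), ?_⟩, ?_⟩
    · apply Equiv.ext; intro a
      simpa using hg2 a
    · apply Subtype.ext; apply Subtype.ext
      show Multiset.map (fun a k => Equiv.ofBijective (fun a => g a k) (hbij k) a)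
        Finset.univ.val = T
      rw [← hmap]
      exact Multiset.map_congr rfl (fun a _ => rfl)

lemma LH.trialOf_edge {n d : ℕ} (i j : Fin d) (a b : Fin n)
    (σ : {σ : Fin d → Equiv.Perm (Fin n) // σ i = 1}) :
    (∃ r ∈ ((LH.trialOf i σ).1 : Multiset (Fin d → Fin n)), r i = a ∧ r j = b)
      ↔ σ.1 j a = b := by
  constructor
  · rintro ⟨r, hr, hri, hrj⟩
    obtain ⟨c, _, rfl⟩ := Multiset.mem_map.1
      (show r ∈ Multiset.map (fun a k => σ.1 k a) Finset.univ.val from hr)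
    have hca : c = a := by simpa [σ.2] using hri
    subst hca
    exact hrj
  · intro h
    exact ⟨fun k => σ.1 k a, Multiset.mem_map.2 ⟨a, Finset.mem_def.1 (mem_univ a), rfl⟩,
      by simp [σ.2], h⟩

/-! ### Counting multisets of trials -/

lemma LH.card_sym_subtype {α : Type*} [DecidableEq α] [Fintype α] (p : α → Prop)
    [DecidablePred p] (m : ℕ) [Fintype {a // p a}] :
    Fintype.card {M : Sym α m // ∀ a ∈ (M : Multiset α), p a}
      = (Fintype.card {a // p a} + m - 1).choose m := by
  rw [← Sym.card_sym_eq_choose]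
  have hbij : Function.Bijective
      (fun S : Sym {a // p a} m =>
        (⟨⟨(S : Multiset {a // p a}).map Subtype.val, by rw [Multiset.card_map]; exact S.2⟩,
          fun a ha => by
            obtain ⟨b, _, rfl⟩ := Multiset.mem_map.1 ha
            exact b.2⟩ : {M : Sym α m // ∀ a ∈ (M : Multiset α), p a})) := by
    constructor
    · intro S S' h
      have := congrArg (fun M : {M : Sym α m // ∀ a ∈ (M : Multiset α), p a} =>
        (M.1 : Multiset α)) h
      apply Subtype.ext
      exact Multiset.map_injective Subtype.val_injective this
    · rintro ⟨M, hM⟩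
      refine ⟨⟨(M : Multiset α).pmap (fun a h => (⟨a, h⟩ : {a // p a})) hM,
        by rw [Multiset.card_pmap]; exact M.2⟩, ?_⟩
      apply Subtype.ext; apply Subtype.ext
      show Multiset.map Subtype.val
          ((M : Multiset α).pmap (fun a h => (⟨a, h⟩ : {a // p a})) hM) = (M : Multiset α)
      rw [Multiset.map_pmap]
      exact Multiset.pmap_eq_map _ _ _ hM |>.trans (Multiset.map_id _)
  exact (Fintype.card_congr (Equiv.ofBijective _ hbij)).symm

lemma LH.card_lt_pairs (d : ℕ) :
    (univ.filter (fun x : Fin d × Fin d => x.1 < x.2)).card = d.choose 2 := by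
  have h1 : (univ.filter (fun x : Fin d × Fin d => x.1 < x.2)).card
      = ∑ j : Fin d, (univ.filter (fun i : Fin d => i < j)).card := by
    rw [Finset.card_filter]
    rw [Fintype.sum_prod_type_right]
    refine Finset.sum_congr rfl (fun j _ => ?_)
    rw [Finset.card_filter]
  have h2 : ∀ j : Fin d, (univ.filter (fun i : Fin d => i < j)).card = (j : ℕ) := by
    intro j
    have : univ.filter (fun i : Fin d => i < j) = Finset.Iio j := by
      ext x; simp
    rw [this, Fin.card_Iio]
  rw [h1]
  simp_rw [h2]
  rw [Fin.sum_univ_eq_sum_range (fun i => i), Finset.sum_range_id, Nat.choose_two_right]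

/-- the expected total number of edges (over all coordinate pairs
`i < j`) common to all members of a uniformly random multiset of `m` Latin
Hypercube `d`-trials on `[n]` equals
`n² · C(d,2) · C((n-1)!·(n!)^(d-2)+m-1, m) / C((n!)^(d-1)+m-1, m)`.
An edge is a datum `(i, j, a_i, a_j)` with `i < j`; it is contained in a trial
if some row of the trial has `i`-th coordinate `a_i` and `j`-th coordinate `a_j`. -/
theorem expected_edge_intersection_LH (n d m : ℕ) (hn : 1 ≤ n) (hd : 2 ≤ d) (hm : 1 ≤ m) :
    (∑ M : Sym (LHT n d) m,
        ((Finset.univ.filter (fun e : (Fin d × Fin d) × Fin n × Fin n =>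
          e.1.1 < e.1.2 ∧ ∀ H ∈ (M : Multiset (LHT n d)),
            ∃ r ∈ ((H : LHT n d).1 : Multiset (Fin d → Fin n)),
              r e.1.1 = e.2.1 ∧ r e.1.2 = e.2.2)).card : ℚ))
      / (Fintype.card (Sym (LHT n d) m) : ℚ)
    = (n : ℚ) ^ 2 * (d.choose 2 : ℚ)
        * (((n - 1).factorial * n.factorial ^ (d - 2) + m - 1).choose m : ℚ)
        / ((n.factorial ^ (d - 1) + m - 1).choose m : ℚ) := by
  classical
  have hd1 : 0 < d := by omega
  have hcardLHT : Fintype.card (LHT n d) = n.factorial ^ (d - 1) := by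
    rw [← Fintype.card_congr (Equiv.ofBijective _
      (LH.trialOf_bijective (n := n) (d := d) ⟨0, hd1⟩))]
    exact LH.card_pi_one d n ⟨0, hd1⟩
  have hSym : Fintype.card (Sym (LHT n d) m) = (n.factorial ^ (d - 1) + m - 1).choose m := by
    rw [Sym.card_sym_eq_choose, hcardLHT]
  have key : (∑ M : Sym (LHT n d) m,
      (Finset.univ.filter (fun e : (Fin d × Fin d) × Fin n × Fin n =>
          e.1.1 < e.1.2 ∧ ∀ H ∈ (M : Multiset (LHT n d)),
            ∃ r ∈ ((H : LHT n d).1 : Multiset (Fin d → Fin n)),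
              r e.1.1 = e.2.1 ∧ r e.1.2 = e.2.2)).card)
      = n ^ 2 * d.choose 2 * ((n - 1).factorial * n.factorial ^ (d - 2) + m - 1).choose m := by
    have step1 : (∑ M : Sym (LHT n d) m,
        (Finset.univ.filter (fun e : (Fin d × Fin d) × Fin n × Fin n =>
            e.1.1 < e.1.2 ∧ ∀ H ∈ (M : Multiset (LHT n d)),
              ∃ r ∈ ((H : LHT n d).1 : Multiset (Fin d → Fin n)),
                r e.1.1 = e.2.1 ∧ r e.1.2 = e.2.2)).card)
        = ∑ e : (Fin d × Fin d) × Fin n × Fin n, ∑ M : Sym (LHT n d) m,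
            if (e.1.1 < e.1.2 ∧ ∀ H ∈ (M : Multiset (LHT n d)),
              ∃ r ∈ ((H : LHT n d).1 : Multiset (Fin d → Fin n)),
                r e.1.1 = e.2.1 ∧ r e.1.2 = e.2.2) then 1 else 0 := by
      simp_rw [Finset.card_filter]
      rw [Finset.sum_comm]
      exact Finset.sum_congr rfl (fun _ _ => Finset.sum_congr rfl (fun _ _ => by congr))
    rw [step1]
    have step2 : ∀ e : (Fin d × Fin d) × Fin n × Fin n,
        (∑ M : Sym (LHT n d) m,
          if (e.1.1 < e.1.2 ∧ ∀ H ∈ (M : Multiset (LHT n d)),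
            ∃ r ∈ ((H : LHT n d).1 : Multiset (Fin d → Fin n)),
              r e.1.1 = e.2.1 ∧ r e.1.2 = e.2.2) then 1 else 0)
        = if e.1.1 < e.1.2
            then ((n - 1).factorial * n.factorial ^ (d - 2) + m - 1).choose m else 0 := by
      intro e
      by_cases he : e.1.1 < e.1.2
      · rw [if_pos he]
        letI F1 : Fintype {H : LHT n d //
            ∃ r ∈ ((H : LHT n d).1 : Multiset (Fin d → Fin n)),
              r e.1.1 = e.2.1 ∧ r e.1.2 = e.2.2} := Subtype.fintype _
        letI F2 : Fintype {M : Sym (LHT n d) m // ∀ H ∈ (M : Multiset (LHT n d)),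
            ∃ r ∈ ((H : LHT n d).1 : Multiset (Fin d → Fin n)),
              r e.1.1 = e.2.1 ∧ r e.1.2 = e.2.2} := Subtype.fintype _
        have hK : Fintype.card {H : LHT n d //
            ∃ r ∈ ((H : LHT n d).1 : Multiset (Fin d → Fin n)),
              r e.1.1 = e.2.1 ∧ r e.1.2 = e.2.2}
            = (n - 1).factorial * n.factorial ^ (d - 2) := by
          have e1 : {σ : {σ : Fin d → Equiv.Perm (Fin n) // σ e.1.1 = 1} //
              σ.1 e.1.2 e.2.1 = e.2.2}
              ≃ {H : LHT n d // ∃ r ∈ ((H : LHT n d).1 : Multiset (Fin d → Fin n)),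
                  r e.1.1 = e.2.1 ∧ r e.1.2 = e.2.2} :=
            (Equiv.ofBijective _ (LH.trialOf_bijective (n := n) (d := d) e.1.1)).subtypeEquiv
              (fun σ => (LH.trialOf_edge e.1.1 e.1.2 e.2.1 e.2.2 σ).symm)
          rw [Fintype.card_congr (e1.symm.trans
            (Equiv.subtypeSubtypeEquivSubtypeInter
              (fun σ : Fin d → Equiv.Perm (Fin n) => σ e.1.1 = 1)
              (fun σ => σ e.1.2 e.2.1 = e.2.2)))]
          exact LH.card_pi_two d n e.1.1 e.1.2 (ne_of_lt he) e.2.1 e.2.2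
        calc (∑ M : Sym (LHT n d) m,
              if (e.1.1 < e.1.2 ∧ ∀ H ∈ (M : Multiset (LHT n d)),
                ∃ r ∈ ((H : LHT n d).1 : Multiset (Fin d → Fin n)),
                  r e.1.1 = e.2.1 ∧ r e.1.2 = e.2.2) then 1 else 0)
            = ∑ M : Sym (LHT n d) m,
              if (∀ H ∈ (M : Multiset (LHT n d)),
                ∃ r ∈ ((H : LHT n d).1 : Multiset (Fin d → Fin n)),
                  r e.1.1 = e.2.1 ∧ r e.1.2 = e.2.2) then 1 else 0 := by
              refine Finset.sum_congr rfl (fun M _ => ?_)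
              simp [he]
          _ = (univ.filter (fun M : Sym (LHT n d) m => ∀ H ∈ (M : Multiset (LHT n d)),
                ∃ r ∈ ((H : LHT n d).1 : Multiset (Fin d → Fin n)),
                  r e.1.1 = e.2.1 ∧ r e.1.2 = e.2.2)).card := (Finset.card_filter _ _).symm
          _ = Fintype.card {M : Sym (LHT n d) m // ∀ H ∈ (M : Multiset (LHT n d)),
                ∃ r ∈ ((H : LHT n d).1 : Multiset (Fin d → Fin n)),
                  r e.1.1 = e.2.1 ∧ r e.1.2 = e.2.2} := (Fintype.card_subtype _).symm
          _ = (Fintype.card {H : LHT n d //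
                ∃ r ∈ ((H : LHT n d).1 : Multiset (Fin d → Fin n)),
                  r e.1.1 = e.2.1 ∧ r e.1.2 = e.2.2} + m - 1).choose m :=
              LH.card_sym_subtype _ m
          _ = ((n - 1).factorial * n.factorial ^ (d - 2) + m - 1).choose m := by rw [hK]
      · rw [if_neg he]
        refine Finset.sum_eq_zero (fun M _ => ?_)
        simp [he]
    simp_rw [step2]
    rw [← Finset.sum_filter, Finset.sum_const, smul_eq_mul]
    have hcardE : (univ.filter
        (fun e : (Fin d × Fin d) × Fin n × Fin n => e.1.1 < e.1.2)).card
        = d.choose 2 * n ^ 2 := by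
      rw [Finset.card_filter, Fintype.sum_prod_type]
      have : ∀ x : Fin d × Fin d,
          (∑ _y : Fin n × Fin n, if x.1 < x.2 then 1 else 0)
          = n ^ 2 * (if x.1 < x.2 then 1 else 0) := by
        intro x
        rw [Finset.sum_const, smul_eq_mul]
        congr 1
        simp [sq]
      simp_rw [this]
      rw [← Finset.mul_sum, ← Finset.card_filter, LH.card_lt_pairs]
      ring
    rw [hcardE]
    ring
  rw [← Nat.cast_sum]
  rw [key, hSym]
  push_cast
  ring
end

section
/- Let n = p^d and fix i < j in [d] and p_i, p_j ∈ [p]. The expected number of (i,j)-edges lying in the sub-block E_{(p_i,p_j)} and common to all members of a uniformly random multiset of m Latin Hypercube d-trials on [p^d] equals p^(2d-2) · binomial(((p^d-1)!)^(d-1) · p^(d²-2d) + m - 1, m) / binomial((p^d!)^(d-1) + m - 1, m). -/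
namespace LHAux

variable {n d : ℕ}

lemma map_perm_univ (σ : Equiv.Perm (Fin n)) :
    (Finset.univ : Finset (Fin n)).val.map σ = (Finset.univ : Finset (Fin n)).val := by
  have h := Finset.map_univ_equiv σ
  calc (Finset.univ : Finset (Fin n)).val.map σ
      = (Finset.univ.map σ.toEmbedding).val := rfl
    _ = (Finset.univ : Finset (Fin n)).val := by rw [h]

/-- The trial associated to a tuple of permutations. -/
def permToTrial (σ : Fin d → Equiv.Perm (Fin n)) : Sym (Fin d → Fin n) n :=
  ⟨(Finset.univ : Finset (Fin n)).val.map (fun v k => σ k v), by simp⟩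

lemma permToTrial_isLH (σ : Fin d → Equiv.Perm (Fin n)) : IsLHTrial (permToTrial σ) := by
  intro k
  show ((Finset.univ : Finset (Fin n)).val.map (fun v k => σ k v)).map (fun r => r k) = _
  rw [Multiset.map_map]
  exact map_perm_univ (σ k)

lemma mem_permToTrial {σ : Fin d → Equiv.Perm (Fin n)} {r : Fin d → Fin n} :
    r ∈ (permToTrial σ : Multiset (Fin d → Fin n)) ↔ ∃ v, (fun k => σ k v) = r := by
  show r ∈ (Finset.univ : Finset (Fin n)).val.map (fun v k => σ k v) ↔ _
  rw [Multiset.mem_map]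
  exact ⟨fun ⟨v, _, h⟩ => ⟨v, h⟩, fun ⟨v, h⟩ => ⟨v, Finset.mem_univ v, h⟩⟩

/-- The normalized map from tuples of permutations (with identity at slot `i`) to trials. -/
def Psi (i : Fin d) (σ : {σ : Fin d → Equiv.Perm (Fin n) // σ i = 1}) : LHT n d :=
  ⟨permToTrial σ.1, permToTrial_isLH σ.1⟩

lemma Psi_bijective (i : Fin d) : Function.Bijective (Psi (n := n) (d := d) i) := by
  constructor
  · rintro ⟨σ, hσ⟩ ⟨τ, hτ⟩ h
    have h' : (permToTrial σ : Multiset (Fin d → Fin n)) = permToTrial τ :=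
      congrArg (fun x => (x.1 : Multiset (Fin d → Fin n))) h
    apply Subtype.ext
    funext k
    apply Equiv.ext
    intro v
    have hv : (fun k => σ k v) ∈ (permToTrial τ : Multiset (Fin d → Fin n)) := by
      rw [← h']; exact mem_permToTrial.2 ⟨v, rfl⟩
    obtain ⟨w, hw⟩ := mem_permToTrial.1 hv
    have hwv : w = v := by
      have h2 := congrFun hw i
      rw [hσ, hτ] at h2
      simpa using h2
    subst hwv
    exact (congrFun hw k).symm
  · rintro ⟨H, hH⟩
    -- choose the row of H whose i-th coordinate is v
    have hmem : ∀ v : Fin n, ∃ r ∈ (H : Multiset (Fin d → Fin n)), r i = v := by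
      intro v
      have : v ∈ (H : Multiset (Fin d → Fin n)).map (fun r => r i) := by
        rw [hH i]; simp
      simpa [Multiset.mem_map] using this
    choose f hf1 hf2 using hmem
    have hfinj : Function.Injective f := fun v w h => by
      rw [← hf2 v, ← hf2 w, h]
    have hHf : (H : Multiset (Fin d → Fin n)) = (Finset.univ : Finset (Fin n)).val.map f := by
      refine (Multiset.eq_of_le_of_card_le ?_ ?_).symm
      · rw [Multiset.le_iff_subset]
        · intro r hr
          obtain ⟨v, _, hv⟩ := Multiset.mem_map.1 hr
          exact hv ▸ hf1 v
        · exact Multiset.Nodup.map hfinj Finset.univ.nodup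
      · simp [H.2]
    have hbij : ∀ k : Fin d, Function.Bijective (fun v => f v k) := by
      intro k
      rw [Fintype.bijective_iff_surjective_and_card]
      refine ⟨fun w => ?_, rfl⟩
      have : w ∈ (H : Multiset (Fin d → Fin n)).map (fun r => r k) := by
        rw [hH k]; simp
      rw [hHf, Multiset.map_map] at this
      obtain ⟨v, _, hv⟩ := Multiset.mem_map.1 this
      exact ⟨v, hv⟩
    refine ⟨⟨fun k => Equiv.ofBijective _ (hbij k), ?_⟩, ?_⟩
    · ext v
      simp [Equiv.ofBijective, hf2]
    · apply Subtype.ext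
      apply Subtype.ext
      show (Finset.univ : Finset (Fin n)).val.map _ = (H : Multiset (Fin d → Fin n))
      rw [hHf]
      apply Multiset.map_congr rfl
      intro v _
      funext k
      rfl


open Equiv in
lemma card_perm_fix {n : ℕ} (a b : Fin n) :
    Nat.card {π : Equiv.Perm (Fin n) // π a = b} = (n - 1).factorial := by
  have e1 : {π : Equiv.Perm (Fin n) // π a = b} ≃ {π : Equiv.Perm (Fin n) // π a = a} :=
    { toFun := fun π => ⟨Equiv.swap a b * π.1, by simp [π.2]⟩
      invFun := fun π => ⟨Equiv.swap a b * π.1, by simp [π.2]⟩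
      left_inv := fun π => by ext1; simp [← mul_assoc]
      right_inv := fun π => by ext1; simp [← mul_assoc] }
  have e2 : {π : Equiv.Perm (Fin n) // π a = a} ≃
      {f : Equiv.Perm (Fin n) // ∀ x, ¬ x ≠ a → f x = x} :=
    Equiv.subtypeEquivRight (fun π => by
      constructor
      · intro h x hx
        rcases not_not.1 hx with rfl; exact h
      · intro h; exact h a (by simp))
  have e3 := (Equiv.Perm.subtypeEquivSubtypePerm (fun x : Fin n => x ≠ a)).symm
  rw [Nat.card_congr ((e1.trans e2).trans e3)]
  rw [Nat.card_eq_fintype_card, Fintype.card_perm]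
  congr 1
  rw [Fintype.card_subtype_compl, Fintype.card_subtype_eq, Fintype.card_fin]

lemma prod_three {d : ℕ} (c : Fin d → ℕ) (i j : Fin d) (hij : i ≠ j) {A B : ℕ}
    (hi : c i = 1) (hj : c j = A) (ho : ∀ k, k ≠ i → k ≠ j → c k = B) :
    ∏ k, c k = A * B ^ (d - 2) := by
  rw [← Finset.mul_prod_erase Finset.univ c (Finset.mem_univ i), hi, one_mul]
  have hji : j ∈ Finset.univ.erase i := Finset.mem_erase.2 ⟨hij.symm, Finset.mem_univ j⟩
  rw [← Finset.mul_prod_erase _ c hji, hj]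
  congr 1
  rw [Finset.prod_congr rfl (fun k hk => ho k
      (Finset.mem_erase.1 (Finset.mem_erase.1 hk).2).1 (Finset.mem_erase.1 hk).1),
    Finset.prod_const, Finset.card_erase_of_mem hji, Finset.card_erase_of_mem (Finset.mem_univ i),
    Finset.card_univ, Fintype.card_fin, Nat.sub_sub]

lemma prod_two {d : ℕ} (c : Fin d → ℕ) (i : Fin d) {B : ℕ}
    (hi : c i = 1) (ho : ∀ k, k ≠ i → c k = B) :
    ∏ k, c k = B ^ (d - 1) := by
  rw [← Finset.mul_prod_erase Finset.univ c (Finset.mem_univ i), hi, one_mul]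
  rw [Finset.prod_congr rfl (fun k hk => ho k (Finset.mem_erase.1 hk).1),
    Finset.prod_const, Finset.card_erase_of_mem (Finset.mem_univ i),
    Finset.card_univ, Fintype.card_fin]

lemma card_sigma_one {n d : ℕ} (i : Fin d) :
    Nat.card {σ : Fin d → Equiv.Perm (Fin n) // σ i = 1} = n.factorial ^ (d - 1) := by
  have h1 : ∀ σ : Fin d → Equiv.Perm (Fin n), σ i = 1 ↔ ∀ k, k = i → σ k = 1 := by
    intro σ
    exact ⟨fun h k hk => hk ▸ h, fun h => h i rfl⟩
  rw [Nat.card_congr ((Equiv.subtypeEquivRight h1).trans (Equiv.subtypePiEquivPi (p := fun (k : Fin d) (π : Equiv.Perm (Fin n)) => k = i → π = 1)))]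
  rw [Nat.card_pi]
  refine prod_two _ i ?_ ?_
  · rw [Nat.card_congr (Equiv.subtypeEquivRight (q := fun π => π = 1) (fun π => by simp))]
    rw [Nat.card_eq_fintype_card, Fintype.card_subtype_eq]
  · intro k hk
    rw [Nat.card_congr (Equiv.subtypeUnivEquiv (fun π => fun h => absurd h hk))]
    rw [Nat.card_eq_fintype_card, Fintype.card_perm, Fintype.card_fin]

lemma card_sigma_edge {n d : ℕ} {i j : Fin d} (hij : i ≠ j) (a b : Fin n) :
    Nat.card {σ : Fin d → Equiv.Perm (Fin n) // σ i = 1 ∧ σ j a = b}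
      = (n - 1).factorial * n.factorial ^ (d - 2) := by
  have h1 : ∀ σ : Fin d → Equiv.Perm (Fin n),
      (σ i = 1 ∧ σ j a = b) ↔ ∀ k, (k = i → σ k = 1) ∧ (k = j → σ k a = b) := by
    intro σ
    constructor
    · intro h k
      exact ⟨fun hk => hk ▸ h.1, fun hk => hk ▸ h.2⟩
    · intro h
      exact ⟨(h i).1 rfl, (h j).2 rfl⟩
  rw [Nat.card_congr ((Equiv.subtypeEquivRight h1).trans (Equiv.subtypePiEquivPi (p := fun (k : Fin d) (π : Equiv.Perm (Fin n)) => (k = i → π = 1) ∧ (k = j → π a = b))))]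
  rw [Nat.card_pi]
  refine prod_three _ i j hij ?_ ?_ ?_
  · rw [Nat.card_congr (Equiv.subtypeEquivRight (q := fun π => π = 1) (fun π => by
      constructor
      · rintro ⟨h1', _⟩; exact h1' rfl
      · rintro rfl; exact ⟨fun _ => rfl, fun h => absurd h hij⟩))]
    rw [Nat.card_eq_fintype_card, Fintype.card_subtype_eq]
  · rw [Nat.card_congr (Equiv.subtypeEquivRight (q := fun π => π a = b) (fun π => by
      constructor
      · rintro ⟨_, h2'⟩; exact h2' rfl
      · intro h; exact ⟨fun hk => absurd hk (Ne.symm hij), fun _ => h⟩))]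
    exact card_perm_fix a b
  · intro k hki hkj
    rw [Nat.card_congr (Equiv.subtypeUnivEquiv (fun π =>
      ⟨fun h => absurd h hki, fun h => absurd h hkj⟩))]
    rw [Nat.card_eq_fintype_card, Fintype.card_perm, Fintype.card_fin]

lemma card_LHT {n d : ℕ} (i : Fin d) : Nat.card (LHT n d) = n.factorial ^ (d - 1) := by
  rw [← Nat.card_congr (Equiv.ofBijective _ (Psi_bijective (n := n) i))]
  exact card_sigma_one i

lemma card_LHT_edge {n d : ℕ} {i j : Fin d} (hij : i ≠ j) (a b : Fin n) :
    Nat.card {H : LHT n d // ∃ r ∈ (H.1 : Multiset (Fin d → Fin n)), r i = a ∧ r j = b}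
      = (n - 1).factorial * n.factorial ^ (d - 2) := by
  have e0 := Equiv.ofBijective _ (Psi_bijective (n := n) (d := d) i)
  have e1 : {σ : {σ : Fin d → Equiv.Perm (Fin n) // σ i = 1} //
        ∃ r ∈ ((Psi i σ).1 : Multiset (Fin d → Fin n)), r i = a ∧ r j = b}
      ≃ {H : LHT n d // ∃ r ∈ (H.1 : Multiset (Fin d → Fin n)), r i = a ∧ r j = b} :=
    (Equiv.ofBijective _ (Psi_bijective (n := n) i)).subtypeEquiv (fun σ => Iff.rfl)
  rw [← Nat.card_congr e1]
  have h2 : ∀ σ : {σ : Fin d → Equiv.Perm (Fin n) // σ i = 1},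
      (∃ r ∈ ((Psi i σ).1 : Multiset (Fin d → Fin n)), r i = a ∧ r j = b) ↔
        σ.1 j a = b := by
    rintro ⟨σ, hσ⟩
    constructor
    · rintro ⟨r, hr, hri, hrj⟩
      obtain ⟨v, rfl⟩ := mem_permToTrial.1 hr
      have hv : v = a := by simpa [hσ] using hri
      simpa [hv] using hrj
    · intro h
      exact ⟨fun k => σ k a, mem_permToTrial.2 ⟨a, rfl⟩, by simpa [hσ], by simpa using h⟩
  rw [Nat.card_congr ((Equiv.subtypeEquivRight h2).trans
    (Equiv.subtypeSubtypeEquivSubtypeInter (fun σ : Fin d → Equiv.Perm (Fin n) => σ i = 1)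
      (fun σ => σ j a = b)))]
  exact card_sigma_edge hij a b

/-- `Sym` of a subtype vs. symmetric powers all of whose members satisfy the predicate. -/
def symSubtypeEquiv {α : Type*} (P : α → Prop) (m : ℕ) :
    Sym {x // P x} m ≃ {M : Sym α m // ∀ x ∈ (M : Multiset α), P x} where
  toFun S := ⟨⟨S.1.map Subtype.val, by rw [Multiset.card_map]; exact S.2⟩,
    by
      intro x hx
      obtain ⟨y, _, hy⟩ := Multiset.mem_map.1 hx
      exact hy ▸ y.2⟩
  invFun M := ⟨(M.1.1.attach).map (fun x => ⟨x.1, M.2 x.1 x.2⟩),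
    by rw [Multiset.card_map, Multiset.card_attach]; exact M.1.2⟩
  left_inv S := by
    apply Sym.coe_injective
    apply Multiset.map_injective Subtype.val_injective
    show Multiset.map _ (Multiset.map _ _) = _
    rw [Multiset.map_map]
    exact Multiset.attach_map_val _
  right_inv M := by
    apply Subtype.ext
    apply Sym.coe_injective
    show Multiset.map _ (Multiset.map _ _) = _
    rw [Multiset.map_map]
    exact Multiset.attach_map_val _

lemma filter_sym_card {α : Type*} [Fintype α] [DecidableEq α] (P : α → Prop) [DecidablePred P]
    (m : ℕ) :
    (Finset.univ.filter (fun M : Sym α m => ∀ x ∈ (M : Multiset α), P x)).card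
      = (Nat.card {x // P x} + m - 1).choose m := by
  classical
  rw [← Fintype.card_subtype, ← Nat.card_eq_fintype_card,
    ← Nat.card_congr (symSubtypeEquiv P m), Nat.card_eq_fintype_card, Sym.card_sym_eq_choose,
    Nat.card_eq_fintype_card]

end LHAux

/-- let `n = p^d`, fix `i < j` and `p_i, p_j ∈ [p]`. Identifying a value
`(u,x) ∈ [p] × [p^(d-1)]` with `u·p^(d-1) + x` (zero-indexed), the expected number of
`(i,j)`-edges lying in the sub-block `E_{(p_i,p_j)} = {((p_i,x_i),(p_j,x_j))}` and common
to all members of a uniformly random multiset of `m` Latin Hypercube `d`-trials on `[p^d]`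
equals `p^(2d-2) · C(((p^d-1)!)^(d-1)·p^(d²-2d)+m-1, m) / C(((p^d)!)^(d-1)+m-1, m)`. -/
theorem expected_subblock_edge_intersection (p d m : ℕ) (hp : 1 ≤ p) (hm : 1 ≤ m)
    (i j : Fin d) (hij : i < j) (pi pj : Fin p) :
    (∑ M : Sym (LHT (p ^ d) d) m,
        ((Finset.univ.filter (fun e : Fin (p ^ (d - 1)) × Fin (p ^ (d - 1)) =>
          ∀ H ∈ (M : Multiset (LHT (p ^ d) d)),
            ∃ r ∈ ((H : LHT (p ^ d) d).1 : Multiset (Fin d → Fin (p ^ d))),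
              (r i : ℕ) = pi * p ^ (d - 1) + e.1 ∧
              (r j : ℕ) = pj * p ^ (d - 1) + e.2)).card : ℚ))
      / (Fintype.card (Sym (LHT (p ^ d) d) m) : ℚ)
    = (p : ℚ) ^ (2 * d - 2)
        * (((p ^ d - 1).factorial ^ (d - 1) * p ^ (d ^ 2 - 2 * d) + m - 1).choose m : ℚ)
        / (((p ^ d).factorial ^ (d - 1) + m - 1).choose m : ℚ) := by
  classical
  have hd2 : 2 ≤ d := by
    have h1 : (i : ℕ) < j := hij
    have h2 := j.isLt
    omega
  have hij' : i ≠ j := ne_of_lt hij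
  have hb : ∀ (u : Fin p) (x : Fin (p ^ (d - 1))), (u : ℕ) * p ^ (d - 1) + x < p ^ d := by
    intro u x
    have hu := u.isLt
    have hx := x.isLt
    have h1 : (u : ℕ) * p ^ (d - 1) + x < ((u : ℕ) + 1) * p ^ (d - 1) := by
      rw [add_mul, one_mul]; exact Nat.add_lt_add_left hx _
    have h2 : ((u : ℕ) + 1) * p ^ (d - 1) ≤ p * p ^ (d - 1) := Nat.mul_le_mul_right _ hu
    have h3 : p * p ^ (d - 1) = p ^ d := by
      rw [← pow_succ']
      congr 1
      omega
    omega
  have key : ∀ (e : Fin (p ^ (d - 1)) × Fin (p ^ (d - 1))) (H : LHT (p ^ d) d),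
      (∃ r ∈ (H.1 : Multiset (Fin d → Fin (p ^ d))),
          (r i : ℕ) = pi * p ^ (d - 1) + e.1 ∧ (r j : ℕ) = pj * p ^ (d - 1) + e.2)
        ↔ (∃ r ∈ (H.1 : Multiset (Fin d → Fin (p ^ d))),
          r i = ⟨pi * p ^ (d - 1) + e.1, hb pi e.1⟩ ∧ r j = ⟨pj * p ^ (d - 1) + e.2, hb pj e.2⟩) := by
    intro e H
    constructor
    · rintro ⟨r, hr, h1, h2⟩
      exact ⟨r, hr, Fin.ext h1, Fin.ext h2⟩
    · rintro ⟨r, hr, h1, h2⟩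
      exact ⟨r, hr, congrArg Fin.val h1, congrArg Fin.val h2⟩
  have harith : (p ^ d - 1).factorial ^ (d - 1) * p ^ (d ^ 2 - 2 * d)
      = (p ^ d - 1).factorial * (p ^ d).factorial ^ (d - 2) := by
    obtain ⟨k, rfl⟩ : ∃ k, d = k + 2 := ⟨d - 2, by omega⟩
    have h1 : (k + 2) ^ 2 - 2 * (k + 2) = (k + 2) * k := by
      have : (k + 2) ^ 2 = (k + 2) * k + 2 * (k + 2) := by ring
      omega
    rw [h1, pow_mul]
    have h2 : k + 2 - 1 = k + 1 := rfl
    have h3 : k + 2 - 2 = k := rfl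
    rw [h2, h3, pow_succ]
    rw [mul_comm ((p ^ (k + 2) - 1).factorial ^ k) ((p ^ (k + 2) - 1).factorial), mul_assoc,
      ← mul_pow]
    congr 2
    rw [mul_comm]
    exact Nat.mul_factorial_pred (pow_pos hp _).ne'
  have hcard : ∀ e : Fin (p ^ (d - 1)) × Fin (p ^ (d - 1)),
      (Finset.univ.filter (fun M : Sym (LHT (p ^ d) d) m =>
          ∀ H ∈ (M : Multiset (LHT (p ^ d) d)),
            ∃ r ∈ ((H : LHT (p ^ d) d).1 : Multiset (Fin d → Fin (p ^ d))),
              (r i : ℕ) = pi * p ^ (d - 1) + e.1 ∧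
              (r j : ℕ) = pj * p ^ (d - 1) + e.2)).card
        = ((p ^ d - 1).factorial * (p ^ d).factorial ^ (d - 2) + m - 1).choose m := by
    intro e
    rw [LHAux.filter_sym_card]
    rw [Nat.card_congr (Equiv.subtypeEquivRight (key e)),
      LHAux.card_LHT_edge hij']
  have hnum : (∑ M : Sym (LHT (p ^ d) d) m,
        (Finset.univ.filter (fun e : Fin (p ^ (d - 1)) × Fin (p ^ (d - 1)) =>
          ∀ H ∈ (M : Multiset (LHT (p ^ d) d)),
            ∃ r ∈ ((H : LHT (p ^ d) d).1 : Multiset (Fin d → Fin (p ^ d))),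
              (r i : ℕ) = pi * p ^ (d - 1) + e.1 ∧
              (r j : ℕ) = pj * p ^ (d - 1) + e.2)).card)
      = p ^ (2 * d - 2)
        * ((p ^ d - 1).factorial * (p ^ d).factorial ^ (d - 2) + m - 1).choose m := by
    rw [Finset.sum_congr rfl (fun M _ => Finset.card_filter _ _)]
    rw [Finset.sum_comm]
    rw [Finset.sum_congr rfl (fun e _ => (Finset.card_filter _ _).symm)]
    refine (Finset.sum_congr rfl (fun e _ => ?_)).trans (?_ : ∑ e : Fin (p ^ (d - 1)) × Fin (p ^ (d - 1)), ((p ^ d - 1).factorial * (p ^ d).factorial ^ (d - 2) + m - 1).choose m = _)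
    · convert hcard e
    rw [Finset.sum_const, smul_eq_mul, Finset.card_univ, Fintype.card_prod, Fintype.card_fin,
      ← pow_add]
    congr 2
    omega
  have hden : Fintype.card (Sym (LHT (p ^ d) d) m)
      = ((p ^ d).factorial ^ (d - 1) + m - 1).choose m := by
    rw [Sym.card_sym_eq_choose, ← Nat.card_eq_fintype_card, LHAux.card_LHT i]
  rw [hden, ← Nat.cast_sum, hnum, ← harith]
  push_cast
  ring
end

section
/- For 0 < a ≤ b and integers 1 ≤ m ≤ k, (a/b)^m ≤ ∏_{i=0}^{m-1} (a+i)/(b+i) ≤ (a/b)^m · exp(k(k-1)/(2a)). -/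
open Real Finset

/-- for `0 < a ≤ b` and integers `1 ≤ m ≤ k`,
`(a/b)^m ≤ ∏_{i=0}^{m-1} (a+i)/(b+i) ≤ (a/b)^m · exp(k(k-1)/(2a))`. -/
theorem product_ratio_bounds (a b : ℝ) (ha : 0 < a) (hab : a ≤ b)
    (m k : ℕ) (hm : 1 ≤ m) (hmk : m ≤ k) :
    (a / b) ^ m ≤ ∏ i ∈ Finset.range m, (a + i) / (b + i) ∧
    ∏ i ∈ Finset.range m, (a + i) / (b + i)
      ≤ (a / b) ^ m * Real.exp (k * (k - 1) / (2 * a)) := by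
  have hb : 0 < b := lt_of_lt_of_le ha hab
  constructor
  · calc (a / b) ^ m = ∏ i ∈ Finset.range m, (a / b) := by
          rw [Finset.prod_const, Finset.card_range]
      _ ≤ ∏ i ∈ Finset.range m, (a + i) / (b + i) := by
          apply Finset.prod_le_prod
          · intro i _; positivity
          · intro i _
            have hbi : (0:ℝ) < b + i := by positivity
            rw [div_le_div_iff₀ hb hbi]
            nlinarith [Nat.cast_nonneg (α := ℝ) i]
  · calc ∏ i ∈ Finset.range m, (a + i) / (b + i)
        ≤ ∏ i ∈ Finset.range m, (a / b * Real.exp (i / a)) := by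
          apply Finset.prod_le_prod
          · intro i _
            have : (0:ℝ) < b + i := by positivity
            positivity
          · intro i _
            have hbi : (0:ℝ) < b + i := by positivity
            have h1 : (a + i) / (b + i) ≤ (a + i) / b := by
              apply div_le_div_of_nonneg_left _ hb
              · linarith [Nat.cast_nonneg (α := ℝ) i]
              · positivity
            have h2 : (a + i) / b = a / b * (1 + i / a) := by
              field_simp
            have h3 : (1 : ℝ) + i / a ≤ Real.exp (i / a) := by
              have := Real.add_one_le_exp ((i : ℝ) / a); linarith
            calc (a + i) / (b + i) ≤ a / b * (1 + i / a) := by rw [← h2]; exact h1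
              _ ≤ a / b * Real.exp (i / a) := by
                  apply mul_le_mul_of_nonneg_left h3; positivity
      _ = (a / b) ^ m * Real.exp (∑ i ∈ Finset.range m, (i : ℝ) / a) := by
          rw [Finset.prod_mul_distrib, Finset.prod_const, Finset.card_range,
            Real.exp_sum]
      _ ≤ (a / b) ^ m * Real.exp (k * (k - 1) / (2 * a)) := by
          apply mul_le_mul_of_nonneg_left _ (by positivity)
          apply Real.exp_le_exp.mpr
          have hsum : (∑ i ∈ Finset.range m, (i : ℝ)) = m * (m - 1) / 2 := by
            have h := congrArg (Nat.cast : ℕ → ℝ) (Finset.sum_range_id_mul_two m)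
            push_cast [Nat.cast_sub hm] at h
            push_cast
            linarith
          rw [← Finset.sum_div, hsum]
          rw [div_le_div_iff₀ (by positivity) (by positivity)]
          have hmk' : (m : ℝ) ≤ k := by exact_mod_cast hmk
          have hm1 : (1 : ℝ) ≤ m := by exact_mod_cast hm
          nlinarith [mul_le_mul hmk' (by linarith : (m:ℝ) - 1 ≤ (k:ℝ) - 1)
            (by linarith) (by linarith : (0:ℝ) ≤ (k:ℝ)), ha.le]
end

section
/- For 0 < a ≤ b and integers 1 ≤ m ≤ k with t = k(k-1)/a ≤ 1, one has 0 ≤ ∏_{i=0}^{m-1} (a+i)/(b+i) − (a/b)^m ≤ (a/b)^m · (exp(k(k-1)/(2a)) − 1) ≤ (a/b)^m · k(k-1)/a. -/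
open Real Finset

lemma sum_range_id_real (m : ℕ) :
    ∑ i ∈ Finset.range m, (i:ℝ) = (m:ℝ) * ((m:ℝ) - 1) / 2 := by
  induction m with
  | zero => simp
  | succ n ih => rw [Finset.sum_range_succ, ih]; push_cast; ring

lemma exp_half_le_two : Real.exp (1/2 : ℝ) ≤ 2 := by
  have h1 : Real.exp (1/2 : ℝ) * Real.exp (1/2 : ℝ) = Real.exp 1 := by
    rw [← Real.exp_add]; norm_num
  have h2 : Real.exp 1 < 2.7182818286 := Real.exp_one_lt_d9
  nlinarith [Real.exp_pos (1/2 : ℝ)]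

/-- for `0 < a ≤ b` and integers `1 ≤ m ≤ k` with `k(k-1)/a ≤ 1`,
`0 ≤ ∏_{i=0}^{m-1} (a+i)/(b+i) − (a/b)^m ≤ (a/b)^m·(exp(k(k-1)/(2a)) − 1) ≤ (a/b)^m·k(k-1)/a`. -/
theorem product_ratio_error_bounds (a b : ℝ) (ha : 0 < a) (hab : a ≤ b)
    (m k : ℕ) (hm : 1 ≤ m) (hmk : m ≤ k) (ht : (k : ℝ) * (k - 1) / a ≤ 1) :
    0 ≤ ∏ i ∈ Finset.range m, (a + i) / (b + i) - (a / b) ^ m ∧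
    ∏ i ∈ Finset.range m, (a + i) / (b + i) - (a / b) ^ m
      ≤ (a / b) ^ m * (Real.exp (k * (k - 1) / (2 * a)) - 1) ∧
    (a / b) ^ m * (Real.exp (k * (k - 1) / (2 * a)) - 1)
      ≤ (a / b) ^ m * (k * (k - 1) / a) := by
  have hb : 0 < b := lt_of_lt_of_le ha hab
  have hk1 : (1:ℝ) ≤ (k:ℝ) := by exact_mod_cast hm.trans hmk
  have hmk' : (m:ℝ) ≤ (k:ℝ) := by exact_mod_cast hmk
  have hm1 : (1:ℝ) ≤ (m:ℝ) := by exact_mod_cast hm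
  have hkk : 0 ≤ (k:ℝ) * ((k:ℝ) - 1) := mul_nonneg (by positivity) (by linarith)
  have ht0 : 0 ≤ (k:ℝ) * ((k:ℝ) - 1) / a := div_nonneg hkk ha.le
  -- part 1
  have h1 : (a/b)^m ≤ ∏ i ∈ Finset.range m, (a + i) / (b + i) := by
    rw [show (a/b)^m = ∏ _i ∈ Finset.range m, (a/b) by rw [Finset.prod_const, Finset.card_range]]
    apply Finset.prod_le_prod
    · intro i _; positivity
    · intro i _
      have hi : (0:ℝ) ≤ (i:ℝ) := Nat.cast_nonneg i
      rw [div_le_div_iff₀ hb (by positivity)]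
      nlinarith
  -- part 2
  have h2 : ∏ i ∈ Finset.range m, (a + i) / (b + i)
      ≤ (a/b)^m * Real.exp ((k:ℝ) * ((k:ℝ) - 1) / (2*a)) := by
    have step1 : ∏ i ∈ Finset.range m, (a + i) / (b + i)
        ≤ ∏ i ∈ Finset.range m, (a/b) * Real.exp ((i:ℝ)/a) := by
      apply Finset.prod_le_prod
      · intro i _; positivity
      · intro i _
        have hi : (0:ℝ) ≤ (i:ℝ) := Nat.cast_nonneg i
        have e1 : (a + i) / (b + i) ≤ (a + i) / b := by
          apply div_le_div_of_nonneg_left (by linarith) hb (by linarith)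
        have e2 : (a + i) / b = (a/b) * (1 + (i:ℝ)/a) := by
          field_simp
        have e3 : (1 + (i:ℝ)/a) ≤ Real.exp ((i:ℝ)/a) := by
          have := Real.add_one_le_exp ((i:ℝ)/a); linarith
        calc (a + i) / (b + i) ≤ (a + i) / b := e1
          _ = (a/b) * (1 + (i:ℝ)/a) := e2
          _ ≤ (a/b) * Real.exp ((i:ℝ)/a) := by
              apply mul_le_mul_of_nonneg_left e3 (by positivity)
    have step2 : ∏ i ∈ Finset.range m, (a/b) * Real.exp ((i:ℝ)/a)
        = (a/b)^m * Real.exp ((m:ℝ) * ((m:ℝ) - 1) / (2*a)) := by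
      rw [Finset.prod_mul_distrib, Finset.prod_const, Finset.card_range,
        ← Real.exp_sum, ← Finset.sum_div, sum_range_id_real]
      ring_nf
    have step3 : Real.exp ((m:ℝ) * ((m:ℝ) - 1) / (2*a))
        ≤ Real.exp ((k:ℝ) * ((k:ℝ) - 1) / (2*a)) := by
      apply Real.exp_le_exp.mpr
      exact (div_le_div_iff_of_pos_right (by positivity)).mpr (by nlinarith)
    calc _ ≤ _ := step1
      _ = _ := step2
      _ ≤ (a/b)^m * Real.exp ((k:ℝ) * ((k:ℝ) - 1) / (2*a)) := by
          apply mul_le_mul_of_nonneg_left step3 (by positivity)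
  -- part 3: exp(t/2) - 1 ≤ t for 0 ≤ t ≤ 1
  have h3 : Real.exp ((k:ℝ) * ((k:ℝ) - 1) / (2*a)) - 1 ≤ (k:ℝ) * ((k:ℝ) - 1) / a := by
    set t := (k:ℝ) * ((k:ℝ) - 1) / a with htdef
    have hx : (k:ℝ) * ((k:ℝ) - 1) / (2*a) = t/2 := by rw [htdef]; ring
    rw [hx]
    have h05 : t/2 ≤ 1/2 := by linarith
    have hxe : Real.exp (t/2) - 1 ≤ (t/2) * Real.exp (t/2) := by
      have hneg := Real.add_one_le_exp (-(t/2))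
      have hinv : Real.exp (-(t/2)) * Real.exp (t/2) = 1 := by
        rw [← Real.exp_add]; simp
      nlinarith [Real.exp_pos (t/2)]
    have hmono : Real.exp (t/2) ≤ Real.exp (1/2 : ℝ) := Real.exp_le_exp.mpr h05
    have := exp_half_le_two
    nlinarith [Real.exp_pos (t/2), ht0]
  refine ⟨by linarith, by linarith, ?_⟩
  apply mul_le_mul_of_nonneg_left h3 (by positivity)
end

section
/- Let 0 < a ≤ b, λ = a/b, and suppose k(k-1)/a ≤ 1. Define P = ∑_{m=1}^k (−1)^(m+1) binomial(k,m) ∏_{i=0}^{m-1} (a+i)/(b+i). Then |P − (1 − exp(−kλ))| ≤ exp(kλ)·k(k-1)/a + exp(−kλ)·kλ². -/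
open Real Finset

private lemma exp_le_one_add_two_mul {x : ℝ} (hx : 0 ≤ x) (hx2 : 2*x ≤ 1) :
    Real.exp x ≤ 1 + 2*x := by
  have h1 : 1 - x ≤ Real.exp (-x) := by linarith [Real.add_one_le_exp (-x)]
  have h2 : Real.exp x * (1 - x) ≤ 1 := by
    calc Real.exp x * (1-x) ≤ Real.exp x * Real.exp (-x) :=
          mul_le_mul_of_nonneg_left h1 (Real.exp_pos x).le
      _ = 1 := by rw [← Real.exp_add]; simp
  nlinarith [Real.exp_pos x]

private lemma exp_neg_mul_le {L : ℝ} (h1 : L ≤ 1) : Real.exp (-L) * (1 - L^2) ≤ 1 - L := by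
  have h2 : Real.exp (-L) * (1 + L) ≤ 1 := by
    have h := mul_le_mul_of_nonneg_left (Real.add_one_le_exp L) (Real.exp_pos (-L)).le
    rw [← Real.exp_add] at h; simp at h; linarith
  nlinarith [Real.exp_pos (-L)]

/-- let `0 < a ≤ b`, `λ = a/b`, and `k(k-1)/a ≤ 1` with `k` a positive
integer. For the inclusion–exclusion expression
`P = ∑_{m=1}^k (−1)^(m+1) C(k,m) ∏_{i=0}^{m-1} (a+i)/(b+i)` one has
`|P − (1 − exp(−kλ))| ≤ exp(kλ)·k(k-1)/a + exp(−kλ)·kλ²`. -/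
theorem inclusion_exclusion_coverage_bound (a b : ℝ) (ha : 0 < a) (hab : a ≤ b)
    (k : ℕ) (hk : 1 ≤ k) (ht : (k : ℝ) * (k - 1) / a ≤ 1) :
    |(∑ m ∈ Finset.Icc 1 k, (-1 : ℝ) ^ (m + 1) * (k.choose m : ℝ)
        * ∏ i ∈ Finset.range m, (a + i) / (b + i))
      - (1 - Real.exp (-(k * (a / b))))|
    ≤ Real.exp (k * (a / b)) * k * (k - 1) / a
      + Real.exp (-(k * (a / b))) * k * (a / b) ^ 2 := by
  have hb : 0 < b := lt_of_lt_of_le ha hab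
  set L : ℝ := a / b with hL
  have hL0 : 0 < L := div_pos ha hb
  have hL1 : L ≤ 1 := div_le_one_of_le₀ hab hb.le
  have hK1 : (0:ℝ) ≤ (k:ℝ) - 1 := by
    have : (1:ℝ) ≤ (k:ℝ) := by exact_mod_cast hk
    linarith
  have hkk : (0:ℝ) ≤ (k:ℝ) * ((k:ℝ) - 1) / a := by positivity
  -- per-m product bounds
  have key : ∀ m ∈ Finset.Icc 1 k,
      0 ≤ (∏ i ∈ Finset.range m, (a + i) / (b + i)) - L^m ∧
      (∏ i ∈ Finset.range m, (a + i) / (b + i)) - L^m ≤ L^m * ((k:ℝ)*((k:ℝ)-1)/a) := by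
    intro m hm
    simp only [Finset.mem_Icc] at hm
    have hmk : m ≤ k := hm.2
    have hm1 : 1 ≤ m := hm.1
    have hlow : L^m ≤ ∏ i ∈ Finset.range m, (a + i) / (b + i) := by
      have hLm : L^m = ∏ _i ∈ Finset.range m, L := by simp
      rw [hLm]
      refine Finset.prod_le_prod (fun i _ => hL0.le) (fun i _ => ?_)
      rw [hL, div_le_div_iff₀ hb (by positivity)]
      have : (0:ℝ) ≤ (i:ℝ) := Nat.cast_nonneg i
      nlinarith
    set S : ℝ := ∑ i ∈ Finset.range m, (i:ℝ)/a with hS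
    have hS0 : 0 ≤ S := Finset.sum_nonneg fun i _ => by positivity
    have hSval : 2 * S = (m:ℝ) * ((m:ℝ) - 1) / a := by
      have h := Finset.sum_range_id_mul_two m
      have h2 : ((∑ i ∈ Finset.range m, i : ℕ) : ℝ) * 2 = (m:ℝ) * ((m:ℝ) - 1) := by
        calc ((∑ i ∈ Finset.range m, i : ℕ) : ℝ) * 2
            = (((∑ i ∈ Finset.range m, i) * 2 : ℕ) : ℝ) := by push_cast; ring
          _ = ((m * (m-1) : ℕ) : ℝ) := by rw [h]
          _ = (m:ℝ) * ((m:ℝ) - 1) := by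
              rw [Nat.cast_mul, Nat.cast_sub hm1]; push_cast; ring
      push_cast at h2
      rw [hS, ← Finset.sum_div]
      field_simp
      linarith
    have hSle : 2 * S ≤ (k:ℝ)*((k:ℝ)-1)/a := by
      rw [hSval]
      have hm' : (m:ℝ) ≤ (k:ℝ) := by exact_mod_cast hmk
      have hm1' : (1:ℝ) ≤ (m:ℝ) := by exact_mod_cast hm1
      have hmm : (m:ℝ) * ((m:ℝ) - 1) ≤ (k:ℝ) * ((k:ℝ) - 1) := by nlinarith
      gcongr
    have hS1 : 2 * S ≤ 1 := hSle.trans ht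
    have hup : (∏ i ∈ Finset.range m, (a + i) / (b + i)) ≤ L^m * Real.exp S := by
      have step : ∀ i ∈ Finset.range m, (a + i) / (b + i) ≤ L * Real.exp ((i:ℝ)/a) := by
        intro i _
        have h1 : (a + i) / (b + i) ≤ (a + i) / b := by
          apply div_le_div_of_nonneg_left (by positivity) hb
          simp [Nat.cast_nonneg]
        have h2 : (a + i) / b = L * (1 + (i:ℝ)/a) := by
          rw [hL]; field_simp
        have h3 : (1:ℝ) + (i:ℝ)/a ≤ Real.exp ((i:ℝ)/a) := by
          linarith [Real.add_one_le_exp ((i:ℝ)/a)]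
        calc (a + i) / (b + i) ≤ (a + i) / b := h1
          _ = L * (1 + (i:ℝ)/a) := h2
          _ ≤ L * Real.exp ((i:ℝ)/a) := by nlinarith
      calc (∏ i ∈ Finset.range m, (a + i) / (b + i))
          ≤ ∏ i ∈ Finset.range m, L * Real.exp ((i:ℝ)/a) := by
            refine Finset.prod_le_prod (fun i _ => by positivity) step
        _ = L^m * Real.exp S := by
            rw [Finset.prod_mul_distrib, Finset.prod_const, Finset.card_range,
              ← Real.exp_sum]
    have hexp : Real.exp S ≤ 1 + 2*S := exp_le_one_add_two_mul hS0 hS1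
    have hLm : (0:ℝ) ≤ L^m := by positivity
    have hexpand : L^m * (1+2*S) = L^m + L^m * (2*S) := by ring
    have hmul := mul_le_mul_of_nonneg_left hSle hLm
    have hup2 : (∏ i ∈ Finset.range m, (a + i) / (b + i)) ≤ L^m * (1 + 2*S) :=
      hup.trans (mul_le_mul_of_nonneg_left hexp hLm)
    exact ⟨by linarith, by linarith⟩
  -- binomial identity
  have hIcc : Finset.erase (Finset.range (k+1)) 0 = Finset.Icc 1 k := by
    ext m; simp; omega
  have hbinom : (1 - L)^k
      = ∑ m ∈ Finset.range (k+1), (-L)^m * (k.choose m : ℝ) := by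
    have h := add_pow (-L) 1 k
    simp only [one_pow, mul_one] at h
    rw [show (1:ℝ) - L = -L + 1 by ring, h]
  have hident : ∑ m ∈ Finset.Icc 1 k, (-1 : ℝ) ^ (m + 1) * (k.choose m : ℝ) * L^m
      = 1 - (1 - L)^k := by
    rw [hbinom, ← hIcc, ← Finset.add_sum_erase _ _ (by simp : 0 ∈ Finset.range (k+1))]
    simp only [pow_zero, one_mul, Nat.choose_zero_right, Nat.cast_one]
    have hterm : ∀ m : ℕ, ((-L:ℝ))^m * (k.choose m : ℝ)
        = -((-1:ℝ)^(m+1) * (k.choose m : ℝ) * L^m) := by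
      intro m; rw [neg_pow, pow_succ]; ring
    simp_rw [hterm, Finset.sum_neg_distrib]
    ring
  -- E1 bound
  have hE1 : |(∑ m ∈ Finset.Icc 1 k, (-1 : ℝ) ^ (m + 1) * (k.choose m : ℝ)
        * ∏ i ∈ Finset.range m, (a + i) / (b + i)) - (1 - (1-L)^k)|
      ≤ Real.exp ((k:ℝ) * L) * k * ((k:ℝ) - 1) / a := by
    rw [← hident, ← Finset.sum_sub_distrib]
    have hre : ∀ m ∈ Finset.Icc 1 k,
        (-1 : ℝ) ^ (m + 1) * (k.choose m : ℝ) * (∏ i ∈ Finset.range m, (a + i) / (b + i))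
          - (-1 : ℝ) ^ (m + 1) * (k.choose m : ℝ) * L^m
        = (-1 : ℝ) ^ (m + 1) * (k.choose m : ℝ)
          * ((∏ i ∈ Finset.range m, (a + i) / (b + i)) - L^m) := fun m _ => by ring
    rw [Finset.sum_congr rfl hre]
    calc |∑ m ∈ Finset.Icc 1 k, (-1 : ℝ) ^ (m + 1) * (k.choose m : ℝ)
            * ((∏ i ∈ Finset.range m, (a + i) / (b + i)) - L^m)|
        ≤ ∑ m ∈ Finset.Icc 1 k, |(-1 : ℝ) ^ (m + 1) * (k.choose m : ℝ)
            * ((∏ i ∈ Finset.range m, (a + i) / (b + i)) - L^m)| :=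
          Finset.abs_sum_le_sum_abs _ _
      _ = ∑ m ∈ Finset.Icc 1 k, (k.choose m : ℝ)
            * ((∏ i ∈ Finset.range m, (a + i) / (b + i)) - L^m) := by
          refine Finset.sum_congr rfl fun m hm => ?_
          rw [abs_mul, abs_mul, abs_pow, abs_neg, abs_one, one_pow, one_mul,
            Nat.abs_cast, abs_of_nonneg (key m hm).1]
      _ ≤ ∑ m ∈ Finset.Icc 1 k, (k.choose m : ℝ) * (L^m * ((k:ℝ)*((k:ℝ)-1)/a)) :=
          Finset.sum_le_sum fun m hm =>
            mul_le_mul_of_nonneg_left (key m hm).2 (Nat.cast_nonneg _)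
      _ = (∑ m ∈ Finset.Icc 1 k, (k.choose m : ℝ) * L^m) * ((k:ℝ)*((k:ℝ)-1)/a) := by
          rw [Finset.sum_mul]; exact Finset.sum_congr rfl fun m _ => by ring
      _ ≤ (1 + L)^k * ((k:ℝ)*((k:ℝ)-1)/a) := by
          refine mul_le_mul_of_nonneg_right ?_ hkk
          have hpow : (L+1)^k = ∑ m ∈ Finset.range (k+1), L^m * (k.choose m : ℝ) := by
            have h := add_pow L 1 k
            simpa using h
          have hsub : Finset.Icc 1 k ⊆ Finset.range (k+1) := by
            intro m hm; simp at hm ⊢; omega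
          calc ∑ m ∈ Finset.Icc 1 k, (k.choose m : ℝ) * L^m
              ≤ ∑ m ∈ Finset.range (k+1), (k.choose m : ℝ) * L^m :=
                Finset.sum_le_sum_of_subset_of_nonneg hsub fun i _ _ => by positivity
            _ = (1 + L)^k := by
                rw [show (1:ℝ) + L = L + 1 by ring, hpow]
                exact Finset.sum_congr rfl fun m _ => by ring
      _ ≤ Real.exp ((k:ℝ) * L) * ((k:ℝ)*((k:ℝ)-1)/a) := by
          refine mul_le_mul_of_nonneg_right ?_ hkk
          have h1 : (1 + L)^k ≤ Real.exp L ^ k :=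
            pow_le_pow_left₀ (by linarith) (by linarith [Real.add_one_le_exp L]) k
          rwa [← Real.exp_nat_mul] at h1
      _ = Real.exp ((k:ℝ) * L) * k * ((k:ℝ) - 1) / a := by ring
  -- E2 bound
  have hexpk : Real.exp (-((k:ℝ)*L)) = Real.exp (-L) ^ k := by
    rw [← Real.exp_nat_mul]; ring_nf
  have h1mL : (0:ℝ) ≤ 1 - L := by linarith
  have h2a : (1-L)^k ≤ Real.exp (-((k:ℝ)*L)) := by
    rw [hexpk]
    exact pow_le_pow_left₀ h1mL (by linarith [Real.add_one_le_exp (-L)]) k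
  have h2b : Real.exp (-((k:ℝ)*L)) * (1 - (k:ℝ)*L^2) ≤ (1-L)^k := by
    have hstep : Real.exp (-L) * (1 - L^2) ≤ 1 - L := exp_neg_mul_le hL1
    have hnn : 0 ≤ Real.exp (-L) * (1 - L^2) :=
      mul_nonneg (Real.exp_pos _).le (by nlinarith [hL0.le, hL1])
    have hpowle : (Real.exp (-L) * (1 - L^2))^k ≤ (1-L)^k := pow_le_pow_left₀ hnn hstep k
    have hbern : 1 + (k:ℝ) * (-(L^2)) ≤ (1 + (-(L^2)))^k :=
      one_add_mul_le_pow (by nlinarith) k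
    calc Real.exp (-((k:ℝ)*L)) * (1 - (k:ℝ)*L^2)
        = Real.exp (-L)^k * (1 + (k:ℝ)*(-(L^2))) := by rw [hexpk]; ring
      _ ≤ Real.exp (-L)^k * (1 + (-(L^2)))^k :=
          mul_le_mul_of_nonneg_left hbern (pow_nonneg (Real.exp_pos _).le k)
      _ = (Real.exp (-L) * (1 - L^2))^k := by rw [← mul_pow]; ring_nf
      _ ≤ (1-L)^k := hpowle
  have hE2 : |Real.exp (-((k:ℝ)*L)) - (1-L)^k| ≤ Real.exp (-((k:ℝ)*L)) * k * L^2 := by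
    rw [abs_of_nonneg (by linarith)]
    have hx : Real.exp (-((k:ℝ)*L)) * (1 - (k:ℝ)*L^2)
        = Real.exp (-((k:ℝ)*L)) - Real.exp (-((k:ℝ)*L)) * k * L^2 := by ring
    linarith [hx ▸ h2b]
  -- assemble
  have habs := abs_add_le
    ((∑ m ∈ Finset.Icc 1 k, (-1 : ℝ) ^ (m + 1) * (k.choose m : ℝ)
        * ∏ i ∈ Finset.range m, (a + i) / (b + i)) - (1 - (1-L)^k))
    (Real.exp (-((k:ℝ)*L)) - (1-L)^k)
  have hsplit : (∑ m ∈ Finset.Icc 1 k, (-1 : ℝ) ^ (m + 1) * (k.choose m : ℝ)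
        * ∏ i ∈ Finset.range m, (a + i) / (b + i)) - (1 - Real.exp (-((k:ℝ)*L)))
      = ((∑ m ∈ Finset.Icc 1 k, (-1 : ℝ) ^ (m + 1) * (k.choose m : ℝ)
        * ∏ i ∈ Finset.range m, (a + i) / (b + i)) - (1 - (1-L)^k))
        + (Real.exp (-((k:ℝ)*L)) - (1-L)^k) := by ring
  calc |(∑ m ∈ Finset.Icc 1 k, (-1 : ℝ) ^ (m + 1) * (k.choose m : ℝ)
        * ∏ i ∈ Finset.range m, (a + i) / (b + i)) - (1 - Real.exp (-((k:ℝ)*L)))|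
      ≤ |(∑ m ∈ Finset.Icc 1 k, (-1 : ℝ) ^ (m + 1) * (k.choose m : ℝ)
        * ∏ i ∈ Finset.range m, (a + i) / (b + i)) - (1 - (1-L)^k)|
        + |Real.exp (-((k:ℝ)*L)) - (1-L)^k| := by rw [hsplit]; exact habs
    _ ≤ Real.exp ((k:ℝ) * L) * k * ((k:ℝ) - 1) / a
        + Real.exp (-((k:ℝ)*L)) * k * L^2 := add_le_add hE1 hE2
end

section
/- With a = ((p^(d-1)−1)!)^(dp) · p^(d(d-1)(p-1)) and b = ((p^(d-1))!)^(dp), the ratio a/b equals 1/p^(d(d-1)) = 1/n^(d-1) where n = p^d; in particular this equals the ratio ((n-1)!)^(d-1)/(n!)^(d-1) arising from Latin Hypercube sampling, so Orthogonal sampling and Latin Hypercube sampling have the same first-order coverage parameter λ = 1/n^(d-1). -/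
lemma fact_ratio_aux (n k : ℕ) (h : 1 ≤ n) :
    (((n - 1).factorial ^ k : ℕ) : ℚ) / ((n.factorial ^ k : ℕ) : ℚ)
      = 1 / (n : ℚ) ^ k := by
  have h1 : n.factorial = n * (n - 1).factorial := (Nat.mul_factorial_pred (Nat.one_le_iff_ne_zero.mp h)).symm
  have hf : ((n - 1).factorial : ℚ) ≠ 0 := by
    exact_mod_cast (Nat.factorial_pos _).ne'
  have hn : (n : ℚ) ≠ 0 := by exact_mod_cast Nat.one_le_iff_ne_zero.mp h
  rw [h1]
  push_cast
  rw [mul_pow]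
  field_simp

/-- with `a = ((p^(d-1)−1)!)^(dp) · p^(d(d-1)(p-1))` (the number of
Orthogonal `d`-trials containing a fixed tuple) and `b = ((p^(d-1))!)^(dp)` (the total
number of Orthogonal `d`-trials), the ratio `a/b` equals `1/p^(d(d-1)) = 1/n^(d-1)`
where `n = p^d`, and this coincides with the Latin Hypercube ratio
`((n-1)!)^(d-1)/(n!)^(d-1)`; so OS and LHS have the same parameter `λ = 1/n^(d-1)`. -/
theorem orthogonal_and_LH_same_lambda (p d : ℕ) (hp : 1 ≤ p) (hd : 1 ≤ d) :
    (((p ^ (d - 1) - 1).factorial ^ (d * p) * p ^ (d * (d - 1) * (p - 1)) : ℕ) : ℚ)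
        / (((p ^ (d - 1)).factorial ^ (d * p) : ℕ) : ℚ)
      = 1 / (p : ℚ) ^ (d * (d - 1)) ∧
    (1 : ℚ) / (p : ℚ) ^ (d * (d - 1)) = 1 / ((p : ℚ) ^ d) ^ (d - 1) ∧
    (1 : ℚ) / ((p : ℚ) ^ d) ^ (d - 1)
      = (((p ^ d - 1).factorial ^ (d - 1) : ℕ) : ℚ)
          / (((p ^ d).factorial ^ (d - 1) : ℕ) : ℚ) := by
  have hp0 : (p : ℚ) ≠ 0 := by exact_mod_cast Nat.one_le_iff_ne_zero.mp hp
  have hm : 1 ≤ p ^ (d - 1) := Nat.one_le_pow _ _ hp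
  refine ⟨?_, ?_, ?_⟩
  · have h1 : (p ^ (d - 1)).factorial = p ^ (d - 1) * (p ^ (d - 1) - 1).factorial :=
      (Nat.mul_factorial_pred (Nat.one_le_iff_ne_zero.mp hm)).symm
    have hf : (((p ^ (d - 1) - 1).factorial : ℕ) : ℚ) ≠ 0 := by
      exact_mod_cast (Nat.factorial_pos _).ne'
    rw [h1]
    push_cast
    rw [mul_pow]
    have hexp : (d - 1) * (d * p) = d * (d - 1) * (p - 1) + d * (d - 1) := by
      have h2 : d * (d - 1) * (p - 1) + d * (d - 1) = d * (d - 1) * ((p - 1) + 1) := by ring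
      rw [h2, Nat.sub_add_cancel hp]
      ring
    rw [← pow_mul, hexp, pow_add]
    field_simp
  · rw [← pow_mul]
  · rw [fact_ratio_aux (p ^ d) (d - 1) (Nat.one_le_pow _ _ hp), ← Nat.cast_pow]
end
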